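/- Fix n and let X_1,...,X_n be independent with E[X_i] = 0, Σ_{i=1}^n E[X_i^2] = 1, and |X_i| ≤ r_n almost surely; let g_1,...,g_n be reals with g_n* = max_k|g_k|, S_k = X_1+...+X_k, Z_k := S_k − g_k, T := inf{k ≥ 1 : S_k ≤ g_k}, Ẑ_k := Z_k·1{T>k}, B_m^2 := Σ_{i=1}^m E[X_i^2], E_n := E[Ẑ_n]. For h > 0 let ν(h) := inf{k ≥ 1 : Z_k ≥ h}. Suppose m ≤ n satisfies P(T > m) ≤ 3E[Ẑ_m]/B_m, B_m ≥ 24 g_n*, and h ≥ 6 g_n*; set κ := 2/h + 4/B_m. Then: (i) 2 E[Ẑ_{ν(h)∧m}] ≤ 3 E[Ẑ_m] ≤ 4 E_n; (ii) P(Ẑ_{ν(h)∧m} > 0) ≤ κ E_n; (iii) 2κ g_n* E_n ≥ E[Ẑ_{ν(h)∧m}] − E_n ≥ δ(h) − 2κ g_n* E_n, where δ(h) := E[X_T; ν(h)∧m < T ≤ n] satisfies 0 ≥ δ(h) ≥ −κ r_n E_n. -/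

import Mathlib

open MeasureTheory ProbabilityTheory Filter

noncomputable section

/-- Partial sums `S_k = X_1 + … + X_k`. -/
def psum {Ω : Type*} (X : ℕ → Ω → ℝ) (k : ℕ) (ω : Ω) : ℝ :=
  ∑ i ∈ Finset.Icc 1 k, X i ω

/-- First crossing time `T = inf {k : 1 ≤ k ≤ n, S_k ≤ g_k}`, with the value `n + 1`
if no crossing occurs up to time `n`. -/
def fpt {Ω : Type*} (n : ℕ) (S : ℕ → Ω → ℝ) (g : ℕ → ℝ) (ω : Ω) : ℕ :=
  sInf ({k | 1 ≤ k ∧ k ≤ n ∧ S k ω ≤ g k} ∪ {n + 1})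

/-- `Ẑ_k = (S_k - g_k) 1{T > k}`. -/
def zhat {Ω : Type*} (n : ℕ) (X : ℕ → Ω → ℝ) (g : ℕ → ℝ) (k : ℕ) (ω : Ω) : ℝ :=
  if k < fpt n (psum X) g ω then psum X k ω - g k else 0

/-- `ν(h) = inf {k ≥ 1 : Z_k ≥ h}`, with the value `n + 1` if no such `k ≤ n` exists. -/
def nuTime {Ω : Type*} (n : ℕ) (X : ℕ → Ω → ℝ) (g : ℕ → ℝ) (h : ℝ) (ω : Ω) : ℕ :=
  sInf ({k | 1 ≤ k ∧ k ≤ n ∧ h ≤ psum X k ω - g k} ∪ {n + 1})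

/-- real-valued indicator of a proposition -/
def ind (P : Prop) : ℝ := by classical exact if P then 1 else 0

lemma ind_nonneg {P : Prop} : 0 ≤ ind P := by
  unfold ind; split <;> norm_num

lemma ind_le_one {P : Prop} : ind P ≤ 1 := by
  unfold ind; split <;> norm_num

lemma ind_of_true {P : Prop} (h : P) : ind P = 1 := by unfold ind; simp [h]

lemma ind_of_false {P : Prop} (h : ¬ P) : ind P = 0 := by unfold ind; simp [h]

lemma ind_mono {P Q : Prop} (h : P → Q) : ind P ≤ ind Q := by
  unfold ind
  split
  · rename_i hp; rw [if_pos (h hp)]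
  · exact ind_nonneg

lemma abs_ind {P : Prop} : |ind P| = ind P := abs_of_nonneg ind_nonneg

section NatInf

lemma nat_lt_sInf_iff {U : Set ℕ} (hne : U.Nonempty) {t : ℕ} :
    t < sInf U ↔ ∀ u ∈ U, t < u :=
  ⟨fun h u hu => lt_of_lt_of_le h (Nat.sInf_le hu), fun h => h _ (Nat.sInf_mem hne)⟩

variable {Ω : Type*} {n : ℕ} {S : ℕ → Ω → ℝ} {g : ℕ → ℝ} {ω : Ω}

lemma fpt_ne : ({k | 1 ≤ k ∧ k ≤ n ∧ S k ω ≤ g k} ∪ {n + 1}).Nonempty :=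
  ⟨n + 1, Or.inr rfl⟩

lemma fpt_pos : 0 < fpt n S g ω := by
  unfold fpt
  rcases Nat.sInf_mem (fpt_ne (S := S) (g := g) (n := n) (ω := ω)) with h | h
  · exact h.1
  · simp only [Set.mem_singleton_iff] at h; omega

lemma fpt_le_succ : fpt n S g ω ≤ n + 1 :=
  Nat.sInf_le (Or.inr rfl)

lemma lt_fpt_iff {t : ℕ} (ht : t ≤ n) :
    t < fpt n S g ω ↔ ∀ l, 1 ≤ l → l ≤ t → g l < S l ω := by
  unfold fpt
  rw [nat_lt_sInf_iff fpt_ne]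
  constructor
  · intro H l h1 h2
    by_contra hc
    push_neg at hc
    exact absurd (H l (Or.inl ⟨h1, le_trans h2 ht, hc⟩)) (by omega)
  · rintro H u (⟨h1, h2, h3⟩ | hu)
    · by_contra hc
      push_neg at hc
      exact absurd h3 (not_le.mpr (H u h1 (by omega)))
    · simp only [Set.mem_singleton_iff] at hu; omega

lemma fpt_crossing (hT : fpt n S g ω ≤ n) :
    S (fpt n S g ω) ω ≤ g (fpt n S g ω) := by
  unfold fpt at hT ⊢
  rcases Nat.sInf_mem (fpt_ne (S := S) (g := g) (n := n) (ω := ω)) with h | h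
  · exact h.2.2
  · simp only [Set.mem_singleton_iff] at h; omega

lemma fpt_eq_iff {t : ℕ} (h1 : 1 ≤ t) (h2 : t ≤ n) :
    fpt n S g ω = t ↔ ((∀ l, 1 ≤ l → l ≤ t - 1 → g l < S l ω) ∧ S t ω ≤ g t) := by
  constructor
  · intro h
    refine ⟨fun l hl1 hl2 => ?_, h ▸ fpt_crossing (h ▸ h2)⟩
    have := (lt_fpt_iff (show t - 1 ≤ n by omega)).mp (by omega : t - 1 < fpt n S g ω)
    exact this l hl1 hl2
  · rintro ⟨hl, hc⟩
    have hle : fpt n S g ω ≤ t := Nat.sInf_le (Or.inl ⟨h1, h2, hc⟩)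
    have hgt : t - 1 < fpt n S g ω := (lt_fpt_iff (by omega)).mpr hl
    omega

lemma nuTime_ne {X : ℕ → Ω → ℝ} {h : ℝ} :
    ({k | 1 ≤ k ∧ k ≤ n ∧ h ≤ psum X k ω - g k} ∪ {n + 1}).Nonempty :=
  ⟨n + 1, Or.inr rfl⟩

lemma nuTime_pos {X : ℕ → Ω → ℝ} {h : ℝ} : 0 < nuTime n X g h ω := by
  unfold nuTime
  rcases Nat.sInf_mem (nuTime_ne (X := X) (g := g) (n := n) (ω := ω) (h := h)) with hh | hh
  · exact hh.1
  · simp only [Set.mem_singleton_iff] at hh; omega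

lemma nuTime_le_succ {X : ℕ → Ω → ℝ} {h : ℝ} : nuTime n X g h ω ≤ n + 1 :=
  Nat.sInf_le (Or.inr rfl)

lemma lt_nuTime_iff {X : ℕ → Ω → ℝ} {h : ℝ} {t : ℕ} (ht : t ≤ n) :
    t < nuTime n X g h ω ↔ ∀ l, 1 ≤ l → l ≤ t → psum X l ω - g l < h := by
  unfold nuTime
  rw [nat_lt_sInf_iff nuTime_ne]
  constructor
  · intro H l h1 h2
    by_contra hc
    push_neg at hc
    exact absurd (H l (Or.inl ⟨h1, le_trans h2 ht, hc⟩)) (by omega)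
  · rintro H u (⟨h1, h2, h3⟩ | hu)
    · by_contra hc
      push_neg at hc
      exact absurd h3 (not_le.mpr (H u h1 (by omega)))
    · simp only [Set.mem_singleton_iff] at hu; omega

lemma nuTime_crossing {X : ℕ → Ω → ℝ} {h : ℝ} (hT : nuTime n X g h ω ≤ n) :
    h ≤ psum X (nuTime n X g h ω) ω - g (nuTime n X g h ω) := by
  unfold nuTime at hT ⊢
  rcases Nat.sInf_mem (nuTime_ne (X := X) (g := g) (n := n) (ω := ω) (h := h)) with hh | hh
  · exact hh.2.2
  · simp only [Set.mem_singleton_iff] at hh; omega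

end NatInf

section Past

variable {Ω : Type*} (n : ℕ) (X : ℕ → Ω → ℝ)

/-- indices up to `j` -/
def pastIdx (j : ℕ) : Finset {i // i ∈ Finset.Icc 1 n} :=
  Finset.univ.filter (fun i => (i : ℕ) ≤ j)

/-- the σ-algebra of the past up to time `j` -/
def Fpast (j : ℕ) : MeasurableSpace Ω :=
  MeasurableSpace.comap (fun ω (i : pastIdx n j) => X (i : ℕ) ω) MeasurableSpace.pi

variable {n X}

variable [MeasureSpace Ω]

lemma measurable_V {j : ℕ} (hmeas : ∀ i, Measurable (X i)) :
    Measurable (fun ω (i : pastIdx n j) => X (i : ℕ) ω) :=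
  measurable_pi_lambda _ (fun i => hmeas i)

lemma Fpast_le {j : ℕ} (hmeas : ∀ i, Measurable (X i)) :
    Fpast n X j ≤ (inferInstance : MeasurableSpace Ω) :=
  measurable_iff_comap_le.mp (measurable_V hmeas)

lemma Fpast_mono {j k : ℕ} (hjk : j ≤ k) : Fpast n X j ≤ Fpast n X k := by
  have hproj : Measurable (fun (f : pastIdx n k → ℝ) (i : pastIdx n j) =>
      f ⟨i.1, by have := i.2; simp only [pastIdx, Finset.mem_filter] at this ⊢
                 exact ⟨this.1, le_trans this.2 hjk⟩⟩) :=
    measurable_pi_lambda _ (fun i => measurable_pi_apply _)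
  unfold Fpast
  rw [show (fun ω (i : pastIdx n j) => X (i : ℕ) ω) =
      (fun (f : pastIdx n k → ℝ) (i : pastIdx n j) =>
        f ⟨i.1, by have := i.2; simp only [pastIdx, Finset.mem_filter] at this ⊢
                   exact ⟨this.1, le_trans this.2 hjk⟩⟩) ∘
      (fun ω (i : pastIdx n k) => X (i : ℕ) ω) from rfl]
  rw [← MeasurableSpace.comap_comp]
  exact MeasurableSpace.comap_mono (measurable_iff_comap_le.mp hproj)

lemma measurable_X_past {l j : ℕ} (hl : l ∈ Finset.Icc 1 n) (hlj : l ≤ j) :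
    Measurable[Fpast n X j] (X l) := by
  have hV : Measurable[Fpast n X j] (fun ω (i : pastIdx n j) => X (i : ℕ) ω) :=
    measurable_iff_comap_le.mpr le_rfl
  exact (measurable_pi_apply (⟨⟨l, hl⟩, by simp [pastIdx, hlj]⟩ : pastIdx n j)).comp hV

lemma measurable_psum_past {i j : ℕ} (hij : i ≤ j) (hin : i ≤ n) :
    Measurable[Fpast n X j] (psum X i) := by
  unfold psum
  apply Finset.measurable_sum
  intro l hl
  simp only [Finset.mem_Icc] at hl
  exact measurable_X_past (Finset.mem_Icc.mpr ⟨hl.1, le_trans hl.2 hin⟩) (le_trans hl.2 hij)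

variable [IsProbabilityMeasure (ℙ : Measure Ω)]

/-- Key lemma: integral of `X k` over a past event vanishes. -/
lemma integral_X_past_zero
    (hmeas : ∀ i, Measurable (X i))
    (hind : iIndepFun
      (fun i : {i // i ∈ Finset.Icc 1 n} => X i) ℙ)
    (hmean : ∀ i ∈ Finset.Icc 1 n, ∫ ω, X i ω = 0)
    (hint : ∀ i ∈ Finset.Icc 1 n, Integrable (X i) ℙ)
    {k : ℕ} (hk : k ∈ Finset.Icc 1 n) {A : Set Ω}
    (hA : MeasurableSet[Fpast n X (k-1)] A) :
    ∫ ω in A, X k ω = 0 := by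
  obtain ⟨B, hB, rfl⟩ := hA
  have hdisj : Disjoint (pastIdx n (k-1)) ({⟨k, hk⟩} : Finset {i // i ∈ Finset.Icc 1 n}) := by
    rw [Finset.disjoint_singleton_right]
    simp only [pastIdx, Finset.mem_filter, Finset.mem_univ, true_and]
    intro h2
    have := (Finset.mem_Icc.mp hk).1
    omega
  have hIF := hind.indepFun_finset (pastIdx n (k-1)) {⟨k, hk⟩} hdisj (fun i => hmeas i)
  have hIF2 : IndepFun (fun ω => Set.indicator B (fun _ => (1:ℝ))
      ((fun (i : pastIdx n (k-1)) => X (i : ℕ) ω)))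
      (X k) ℙ := by
    have hφ : Measurable (Set.indicator B
        (fun _ : ({x // x ∈ pastIdx n (k-1)} → ℝ) => (1:ℝ))) :=
      measurable_const.indicator hB
    have hψ : Measurable (fun f : ({x // x ∈ ({⟨k, hk⟩} : Finset {i // i ∈ Finset.Icc 1 n})} → ℝ) =>
        f ⟨⟨k, hk⟩, Finset.mem_singleton_self _⟩) := measurable_pi_apply _
    exact hIF.comp hφ hψ
  have hint1 : Integrable (fun ω => Set.indicator B (fun _ => (1:ℝ))
      ((fun (i : pastIdx n (k-1)) => X (i : ℕ) ω))) ℙ := by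
    have hφ : Measurable (Set.indicator B
        (fun _ : ({x // x ∈ pastIdx n (k-1)} → ℝ) => (1:ℝ))) :=
      measurable_const.indicator hB
    refine Integrable.mono' (integrable_const (1:ℝ))
      (hφ.comp (measurable_V hmeas)).aestronglyMeasurable ?_
    filter_upwards with ω
    by_cases hω : (fun (i : pastIdx n (k-1)) => X (i : ℕ) ω) ∈ B <;>
      simp [Set.indicator_apply, hω]
  have hmul := hIF2.integral_mul_eq_mul_integral hint1.aestronglyMeasurable (hint k hk).aestronglyMeasurable
  have hAmeas : MeasurableSet ((fun ω (i : pastIdx n (k-1)) => X (i : ℕ) ω) ⁻¹' B) :=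
    measurable_V hmeas hB
  rw [← integral_indicator hAmeas]
  have heq : Set.indicator ((fun ω (i : pastIdx n (k-1)) => X (i : ℕ) ω) ⁻¹' B) (X k) =
      (fun ω => Set.indicator B (fun _ => (1:ℝ))
        ((fun (i : pastIdx n (k-1)) => X (i : ℕ) ω)) * X k ω) := by
    funext ω
    by_cases hω : (fun (i : pastIdx n (k-1)) => X (i : ℕ) ω) ∈ B <;>
      simp [Set.indicator_apply, hω]
  rw [heq]
  rw [hmean k hk, mul_zero] at hmul
  exact hmul

end Past
section Events

variable {Ω : Type*} [MeasureSpace Ω] {n : ℕ} {X : ℕ → Ω → ℝ} {g : ℕ → ℝ}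

lemma measurableSet_lt_fpt {t j : ℕ} (htn : t ≤ n) (htj : t ≤ j) :
    MeasurableSet[Fpast n X j] {ω | t < fpt n (psum X) g ω} := by
  have : {ω | t < fpt n (psum X) g ω} =
      ⋂ l ∈ Finset.Icc 1 t, {ω | g l < psum X l ω} := by
    ext ω
    simp only [Set.mem_setOf_eq, Set.mem_iInter, Finset.mem_Icc]
    rw [lt_fpt_iff htn]
    constructor
    · intro H l hl; exact H l hl.1 hl.2
    · intro H l h1 h2; exact H l ⟨h1, h2⟩
  rw [this]
  refine MeasurableSet.biInter (Finset.Icc 1 t).countable_toSet (fun l hl => ?_)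
  have hl' : 1 ≤ l ∧ l ≤ t := Finset.mem_Icc.mp hl
  exact measurableSet_lt measurable_const
    (measurable_psum_past (le_trans hl'.2 htj) (le_trans hl'.2 htn))

lemma measurableSet_fpt_eq {t j : ℕ} (ht1 : 1 ≤ t) (htn : t ≤ n) (htj : t ≤ j) :
    MeasurableSet[Fpast n X j] {ω | fpt n (psum X) g ω = t} := by
  have : {ω | fpt n (psum X) g ω = t} =
      {ω | t - 1 < fpt n (psum X) g ω} ∩ {ω | psum X t ω ≤ g t} := by
    ext ω
    simp only [Set.mem_setOf_eq, Set.mem_inter_iff]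
    rw [fpt_eq_iff ht1 htn, lt_fpt_iff (show t - 1 ≤ n by omega)]
  rw [this]
  exact (measurableSet_lt_fpt (by omega) (by omega)).inter
    (measurableSet_le (measurable_psum_past htj htn) measurable_const)

lemma measurableSet_lt_nuTime {h : ℝ} {t j : ℕ} (htn : t ≤ n) (htj : t ≤ j) :
    MeasurableSet[Fpast n X j] {ω | t < nuTime n X g h ω} := by
  have : {ω | t < nuTime n X g h ω} =
      ⋂ l ∈ Finset.Icc 1 t, {ω | psum X l ω - g l < h} := by
    ext ω
    simp only [Set.mem_setOf_eq, Set.mem_iInter, Finset.mem_Icc]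
    rw [lt_nuTime_iff htn]
    constructor
    · intro H l hl; exact H l hl.1 hl.2
    · intro H l h1 h2; exact H l ⟨h1, h2⟩
  rw [this]
  refine MeasurableSet.biInter (Finset.Icc 1 t).countable_toSet (fun l hl => ?_)
  have hl' : 1 ≤ l ∧ l ≤ t := Finset.mem_Icc.mp hl
  exact measurableSet_lt
    ((measurable_psum_past (le_trans hl'.2 htj) (le_trans hl'.2 htn)).sub measurable_const)
    measurable_const

lemma measurableSet_nuTime_le {h : ℝ} {t j : ℕ} (htj : t ≤ j) :
    MeasurableSet[Fpast n X j] {ω | nuTime n X g h ω ≤ t} := by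
  rcases le_or_gt t n with htn | htn
  · have : {ω | nuTime n X g h ω ≤ t} = {ω | t < nuTime n X g h ω}ᶜ := by
      ext ω; simp [not_lt]
    rw [this]
    exact (measurableSet_lt_nuTime htn htj).compl
  · have : {ω | nuTime n X g h ω ≤ t} = Set.univ := by
      ext ω
      simp only [Set.mem_setOf_eq, Set.mem_univ, iff_true]
      exact le_trans nuTime_le_succ (by omega)
    rw [this]; exact MeasurableSet.univ

lemma measurableSet_tau_le {h : ℝ} {m t j : ℕ} (htj : t ≤ j) :
    MeasurableSet[Fpast n X j] {ω | min (nuTime n X g h ω) m ≤ t} := by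
  rcases le_or_gt m t with hmt | hmt
  · have : {ω | min (nuTime n X g h ω) m ≤ t} = Set.univ := by
      ext ω; simp only [Set.mem_setOf_eq, Set.mem_univ, iff_true, min_le_iff]
      exact Or.inr hmt
    rw [this]; exact MeasurableSet.univ
  · have : {ω | min (nuTime n X g h ω) m ≤ t} = {ω | nuTime n X g h ω ≤ t} := by
      ext ω; simp only [Set.mem_setOf_eq, min_le_iff]
      constructor
      · rintro (hh | hh)
        · exact hh
        · exact absurd hh (by omega)
      · exact Or.inl
    rw [this]; exact measurableSet_nuTime_le htj

variable (hmeas : ∀ i, Measurable (X i))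
include hmeas

/-- ambient measurability of `{t < T}` for arbitrary `t` -/
lemma measurableSet_lt_fpt_all (t : ℕ) :
    MeasurableSet {ω | t < fpt n (psum X) g ω} := by
  rcases le_or_gt t n with htn | htn
  · exact Fpast_le hmeas _ (measurableSet_lt_fpt htn le_rfl)
  · have : {ω | t < fpt n (psum X) g ω} = ∅ := by
      ext ω
      simp only [Set.mem_setOf_eq, Set.mem_empty_iff_false, iff_false, not_lt]
      exact le_trans fpt_le_succ (by omega)
    rw [this]; exact MeasurableSet.empty

lemma measurableSet_fpt_eq_all (t : ℕ) :
    MeasurableSet {ω | fpt n (psum X) g ω = t} := by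
  rcases le_or_gt t n with htn | htn
  · rcases Nat.eq_zero_or_pos t with rfl | ht1
    · have : {ω | fpt n (psum X) g ω = 0} = ∅ := by
        ext ω
        simp only [Set.mem_setOf_eq, Set.mem_empty_iff_false, iff_false]
        have := fpt_pos (n := n) (S := psum X) (g := g) (ω := ω)
        omega
      rw [this]; exact MeasurableSet.empty
    · exact Fpast_le hmeas _ (measurableSet_fpt_eq ht1 htn le_rfl)
  · have : {ω | fpt n (psum X) g ω = t} =
        (if t = n + 1 then {ω | n < fpt n (psum X) g ω} else ∅) := by
      split
      · rename_i hv
        subst hv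
        ext ω
        have h1 := fpt_le_succ (n := n) (S := psum X) (g := g) (ω := ω)
        simp only [Set.mem_setOf_eq]
        omega
      · rename_i hv
        ext ω
        have h1 := fpt_le_succ (n := n) (S := psum X) (g := g) (ω := ω)
        simp only [Set.mem_setOf_eq, Set.mem_empty_iff_false, iff_false]
        omega
    rw [this]
    split
    · exact measurableSet_lt_fpt_all hmeas n
    · exact MeasurableSet.empty

lemma measurableSet_nuTime_eq_all {h : ℝ} (t : ℕ) :
    MeasurableSet {ω | nuTime n X g h ω = t} := by
  have key : ∀ s : ℕ, MeasurableSet {ω | nuTime n X g h ω ≤ s} := by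
    intro s
    exact Fpast_le hmeas _ (measurableSet_nuTime_le le_rfl)
  rcases Nat.eq_zero_or_pos t with rfl | ht1
  · have : {ω | nuTime n X g h ω = 0} = {ω | nuTime n X g h ω ≤ 0} := by
      ext ω; simp [Nat.le_zero]
    rw [this]; exact key 0
  · have : {ω | nuTime n X g h ω = t} =
        {ω | nuTime n X g h ω ≤ t} \ {ω | nuTime n X g h ω ≤ t - 1} := by
      ext ω
      simp only [Set.mem_setOf_eq, Set.mem_diff]
      omega
    rw [this]
    exact (key t).diff (key (t-1))

lemma measurableSet_tau_eq_all {h : ℝ} {m : ℕ} (t : ℕ) :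
    MeasurableSet {ω | min (nuTime n X g h ω) m = t} := by
  have : {ω | min (nuTime n X g h ω) m = t} =
      (if t = m then {ω | m ≤ nuTime n X g h ω} else
        if t < m then {ω | nuTime n X g h ω = t} else ∅) := by
    split
    · rename_i hv; subst hv
      ext ω; simp only [Set.mem_setOf_eq]; omega
    · split
      · ext ω; simp only [Set.mem_setOf_eq]; omega
      · ext ω; simp only [Set.mem_setOf_eq, Set.mem_empty_iff_false, iff_false]; omega
  rw [this]
  split
  · have : {ω | m ≤ nuTime n X g h ω} = {ω | nuTime n X g h ω ≤ m - 1}ᶜ := by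
      ext ω; simp only [Set.mem_setOf_eq, Set.mem_compl_iff]
      rcases Nat.eq_zero_or_pos m with rfl | hm
      · simp [nuTime_pos.le]
        have := nuTime_pos (n := n) (X := X) (g := g) (h := h) (ω := ω); omega
      · omega
    rw [this]
    exact (Fpast_le hmeas _ (measurableSet_nuTime_le le_rfl)).compl
  · split
    · exact measurableSet_nuTime_eq_all hmeas t
    · exact MeasurableSet.empty

/-- measurability of a composition `ω ↦ F (τ' ω) ω` for an `ℕ`-valued bounded time -/
lemma measurable_comp_time {τ' : Ω → ℕ} {N : ℕ} (hbd : ∀ ω, τ' ω ≤ N)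
    (hτ : ∀ t, MeasurableSet {ω | τ' ω = t}) (F : ℕ → Ω → ℝ)
    (hF : ∀ t, Measurable (F t)) : Measurable (fun ω => F (τ' ω) ω) := by
  have heq : (fun ω => F (τ' ω) ω) =
      (fun ω => ∑ t ∈ Finset.Icc 0 N, ind (τ' ω = t) * F t ω) := by
    funext ω
    rw [Finset.sum_eq_single (τ' ω)]
    · rw [ind_of_true rfl, one_mul]
    · intro b _ hb
      rw [ind_of_false (fun hc => hb hc.symm), zero_mul]
    · intro hc
      exact absurd (Finset.mem_Icc.mpr ⟨Nat.zero_le _, hbd ω⟩) hc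
  rw [heq]
  refine Finset.measurable_sum _ (fun t _ => Measurable.mul ?_ (hF t))
  have : (fun ω => ind (τ' ω = t)) = Set.indicator {ω' | τ' ω' = t} (fun _ => (1:ℝ)) := by
    funext ω
    by_cases hω : τ' ω = t
    · have hm : ω ∈ {ω' | τ' ω' = t} := hω
      rw [ind_of_true hω, Set.indicator_of_mem hm]
    · have hm : ω ∉ {ω' | τ' ω' = t} := hω
      rw [ind_of_false hω, Set.indicator_of_notMem hm]
  rw [this]
  exact measurable_const.indicator (hτ t)

lemma measurable_zhat (k : ℕ) : Measurable (zhat n X g k) := by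
  unfold zhat
  have h1 : MeasurableSet {ω | k < fpt n (psum X) g ω} := measurableSet_lt_fpt_all hmeas k
  have h2 : Measurable (fun ω => psum X k ω - g k) :=
    (Finset.measurable_sum _ (fun i _ => hmeas i)).sub measurable_const
  exact Measurable.ite h1 h2 measurable_const

end Events
section Bridge

lemma ind_congr {P Q : Prop} (h : P ↔ Q) : ind P = ind Q := by
  unfold ind
  split
  · rename_i hp; rw [if_pos (h.mp hp)]
  · rename_i hp; rw [if_neg (fun hq => hp (h.mpr hq))]

lemma ind_eq_indicator {Ω : Type*} (P : Ω → Prop) :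
    (fun ω => ind (P ω)) = Set.indicator {ω' | P ω'} (fun _ => (1:ℝ)) := by
  funext ω
  by_cases hω : P ω
  · have hm : ω ∈ {ω' | P ω'} := hω
    rw [ind_of_true hω, Set.indicator_of_mem hm]
  · have hm : ω ∉ {ω' | P ω'} := hω
    rw [ind_of_false hω, Set.indicator_of_notMem hm]

lemma measurable_ind {Ω : Type*} [MeasurableSpace Ω] {P : Ω → Prop}
    (hP : MeasurableSet {ω | P ω}) : Measurable (fun ω => ind (P ω)) := by
  rw [ind_eq_indicator]
  exact measurable_const.indicator hP

variable {Ω : Type*} [MeasureSpace Ω] [IsProbabilityMeasure (ℙ : Measure Ω)]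

lemma integrable_bdd {f : Ω → ℝ} (hf : Measurable f) {C : ℝ}
    (h : ∀ᵐ ω, |f ω| ≤ C) : Integrable f ℙ := by
  refine Integrable.mono' (integrable_const C) hf.aestronglyMeasurable ?_
  filter_upwards [h] with ω hω
  simpa [Real.norm_eq_abs] using hω

lemma integral_ind_eq {P : Ω → Prop} (hP : MeasurableSet {ω | P ω}) :
    ∫ ω, ind (P ω) = (ℙ {ω | P ω}).toReal := by
  rw [ind_eq_indicator]
  exact MeasureTheory.integral_indicator_one hP

lemma integrable_ind {P : Ω → Prop} (hP : MeasurableSet {ω | P ω}) :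
    Integrable (fun ω => ind (P ω)) ℙ :=
  integrable_bdd (measurable_ind hP) (Filter.Eventually.of_forall (fun ω => by
    rw [abs_ind]; exact ind_le_one))

lemma integrable_mul_ind {f : Ω → ℝ} (hf : Integrable f ℙ) (hfm : Measurable f)
    {P : Ω → Prop} (hP : MeasurableSet {ω | P ω}) :
    Integrable (fun ω => f ω * ind (P ω)) ℙ := by
  refine Integrable.mono' hf.abs (hfm.mul (measurable_ind hP)).aestronglyMeasurable ?_
  filter_upwards with ω
  rw [Real.norm_eq_abs, abs_mul, abs_ind]
  calc |f ω| * ind (P ω) ≤ |f ω| * 1 := by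
        exact mul_le_mul_of_nonneg_left ind_le_one (abs_nonneg _)
    _ = |f ω| := mul_one _

lemma integral_mul_ind_eq_setIntegral {f : Ω → ℝ} {P : Ω → Prop}
    (hP : MeasurableSet {ω | P ω}) :
    ∫ ω, f ω * ind (P ω) = ∫ ω in {ω | P ω}, f ω := by
  rw [← integral_indicator hP]
  congr 1
  funext ω
  by_cases hω : P ω
  · have hm : ω ∈ {ω' | P ω'} := hω
    rw [ind_of_true hω, Set.indicator_of_mem hm, mul_one]
  · have hm : ω ∉ {ω' | P ω'} := hω
    rw [ind_of_false hω, Set.indicator_of_notMem hm, mul_zero]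

variable {n : ℕ} {X : ℕ → Ω → ℝ} {g : ℕ → ℝ}

/-- integral of `X k` times the indicator of a past event vanishes -/
lemma integral_X_mul_ind_zero
    (hmeas : ∀ i, Measurable (X i))
    (hind : iIndepFun
      (fun i : {i // i ∈ Finset.Icc 1 n} => X i) ℙ)
    (hmean : ∀ i ∈ Finset.Icc 1 n, ∫ ω, X i ω = 0)
    (hint : ∀ i ∈ Finset.Icc 1 n, Integrable (X i) ℙ)
    {k : ℕ} (hk : k ∈ Finset.Icc 1 n) {P : Ω → Prop}
    (hP : MeasurableSet[Fpast n X (k-1)] {ω | P ω}) :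
    ∫ ω, X k ω * ind (P ω) = 0 := by
  rw [integral_mul_ind_eq_setIntegral (Fpast_le hmeas _ hP)]
  exact integral_X_past_zero hmeas hind hmean hint hk hP

end Bridge
section Pointwise

variable {Ω : Type*} {n M : ℕ} {X : ℕ → Ω → ℝ} {g : ℕ → ℝ} {σ : Ω → ℕ}

lemma psum_sub_one {t : ℕ} (ht : 1 ≤ t) (ω : Ω) :
    psum X t ω = psum X (t-1) ω + X t ω := by
  obtain ⟨b, rfl⟩ : ∃ b, t = b + 1 := ⟨t - 1, by omega⟩
  simp only [Nat.add_sub_cancel]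
  exact Finset.sum_Icc_succ_top (by omega) _

lemma sum_tail {a : ℕ} (haM : a ≤ M) (ω : Ω) :
    ∑ k ∈ Finset.Icc 1 M, X k ω * ind (a < k) = psum X M ω - psum X a ω := by
  have h1 : ∑ k ∈ Finset.Icc 1 M, X k ω * ind (a < k)
      = ∑ k ∈ Finset.Icc (a+1) M, X k ω * ind (a < k) := by
    refine (Finset.sum_subset ?_ ?_).symm
    · intro x hx
      simp only [Finset.mem_Icc] at hx ⊢
      omega
    · intro x hx hx'
      simp only [Finset.mem_Icc] at hx hx'
      rw [ind_of_false (by omega), mul_zero]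
  have h2 : ∑ k ∈ Finset.Icc (a+1) M, X k ω * ind (a < k)
      = ∑ k ∈ Finset.Icc (a+1) M, X k ω := by
    refine Finset.sum_congr rfl (fun k hk => ?_)
    simp only [Finset.mem_Icc] at hk
    rw [ind_of_true (by omega), mul_one]
  rw [h1, h2]
  have h3 : psum X a ω + ∑ k ∈ Finset.Icc (a+1) M, X k ω = psum X M ω := by
    unfold psum
    rw [show Finset.Icc 1 a = Finset.Ioc 0 a from (Finset.Icc_add_one_left_eq_Ioc 0 a) ▸ rfl,
        show Finset.Icc (a+1) M = Finset.Ioc a M from (Finset.Icc_add_one_left_eq_Ioc a M) ▸ rfl,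
        show Finset.Icc 1 M = Finset.Ioc 0 M from (Finset.Icc_add_one_left_eq_Ioc 0 M) ▸ rfl]
    exact Finset.sum_Ioc_consecutive _ (Nat.zero_le a) haM
  linarith

lemma pointwise_key (hMn : M ≤ n) (hσ2 : ∀ ω, σ ω ≤ M) (ω : Ω) :
    zhat n X g (σ ω) ω - zhat n X g M ω =
    -(∑ k ∈ Finset.Icc 1 M, X k ω * ind (σ ω < k ∧ σ ω < fpt n (psum X) g ω))
    + (∑ k ∈ Finset.Icc 1 M, X k ω * ind (fpt n (psum X) g ω < k ∧ σ ω < fpt n (psum X) g ω))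
    + ((g M - g (σ ω)) * ind (σ ω < fpt n (psum X) g ω ∧ M < fpt n (psum X) g ω)
       + (g (fpt n (psum X) g ω) - g (σ ω)) *
          ind (σ ω < fpt n (psum X) g ω ∧ fpt n (psum X) g ω ≤ M))
    + (psum X (fpt n (psum X) g ω) ω - g (fpt n (psum X) g ω)) *
        ind (σ ω < fpt n (psum X) g ω ∧ fpt n (psum X) g ω ≤ M) := by
  have hzσ : zhat n X g (σ ω) ω =
      if σ ω < fpt n (psum X) g ω then psum X (σ ω) ω - g (σ ω) else 0 := rfl
  have hzM : zhat n X g M ω =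
      if M < fpt n (psum X) g ω then psum X M ω - g M else 0 := rfl
  set T := fpt n (psum X) g ω with hT
  set a := σ ω with ha
  rcases le_or_gt T a with hTa | haT
  · have hnot : ¬ (a < T) := not_lt.mpr hTa
    have hnotM : ¬ (M < T) := not_lt.mpr (le_trans hTa (hσ2 ω))
    have e0 : ∀ k, X k ω * ind (a < k ∧ a < T) = 0 := fun k => by
      rw [ind_of_false (fun hc => hnot hc.2), mul_zero]
    have e1 : ∀ k, X k ω * ind (T < k ∧ a < T) = 0 := fun k => by
      rw [ind_of_false (fun hc => hnot hc.2), mul_zero]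
    rw [hzσ, hzM, if_neg hnot, if_neg hnotM,
      Finset.sum_congr rfl (fun k _ => e0 k), Finset.sum_congr rfl (fun k _ => e1 k),
      ind_of_false (fun hc => hnot hc.1), ind_of_false (fun hc => hnot hc.1)]
    simp
  · rcases le_or_gt T M with hTM | hMT
    · have e0 : ∀ k, X k ω * ind (a < k ∧ a < T) = X k ω * ind (a < k) := fun k => by
        rw [ind_congr (and_iff_left haT)]
      have e1 : ∀ k, X k ω * ind (T < k ∧ a < T) = X k ω * ind (T < k) := fun k => by
        rw [ind_congr (and_iff_left haT)]
      rw [hzσ, hzM, if_pos haT, if_neg (not_lt.mpr hTM),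
        Finset.sum_congr rfl (fun k _ => e0 k), Finset.sum_congr rfl (fun k _ => e1 k),
        sum_tail (le_trans (le_of_lt haT) hTM) ω, sum_tail hTM ω,
        ind_of_false (fun hc => (not_lt.mpr hTM) hc.2), ind_of_true ⟨haT, hTM⟩]
      ring
    · have e0 : ∀ k, X k ω * ind (a < k ∧ a < T) = X k ω * ind (a < k) := fun k => by
        rw [ind_congr (and_iff_left haT)]
      have e1 : ∀ k, k ∈ Finset.Icc 1 M → X k ω * ind (T < k ∧ a < T) = 0 := fun k hk => by
        simp only [Finset.mem_Icc] at hk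
        rw [ind_of_false (fun hc => absurd hc.1 (by omega)), mul_zero]
      rw [hzσ, hzM, if_pos haT, if_pos hMT,
        Finset.sum_congr rfl (fun k _ => e0 k), Finset.sum_congr rfl e1,
        sum_tail (hσ2 ω) ω,
        ind_of_true ⟨haT, hMT⟩, ind_of_false (fun hc => (not_lt.mpr hc.2) hMT)]
      simp only [Finset.sum_const_zero]
      ring

end Pointwise
section MainLemma

variable {Ω : Type*} [MeasureSpace Ω] [IsProbabilityMeasure (ℙ : Measure Ω)]
variable {n M : ℕ} {X : ℕ → Ω → ℝ} {g : ℕ → ℝ} {σ : Ω → ℕ} {r gs : ℝ}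

lemma measurable_of_eq_all {τ' : Ω → ℕ} (h : ∀ t, MeasurableSet {ω | τ' ω = t}) :
    Measurable τ' :=
  measurable_to_countable' (fun t => h t)

lemma measurable_fpt (hmeas : ∀ i, Measurable (X i)) :
    Measurable (fpt n (psum X) g) :=
  measurable_of_eq_all (measurableSet_fpt_eq_all hmeas)

lemma zhat_nonneg {k : ℕ} (hk1 : 1 ≤ k) (hkn : k ≤ n) (ω : Ω) :
    0 ≤ zhat n X g k ω := by
  unfold zhat
  split
  · rename_i hlt
    have := (lt_fpt_iff hkn).mp hlt k hk1 le_rfl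
    linarith
  · exact le_refl 0

lemma zhat_pos_iff {k : ℕ} (hk1 : 1 ≤ k) (hkn : k ≤ n) (ω : Ω) :
    0 < zhat n X g k ω ↔ k < fpt n (psum X) g ω := by
  unfold zhat
  split
  · rename_i hlt
    have := (lt_fpt_iff hkn).mp hlt k hk1 le_rfl
    constructor
    · intro _; exact hlt
    · intro _; linarith
  · rename_i hlt
    constructor
    · intro hc; exact absurd hc (lt_irrefl 0)
    · intro hc; exact absurd hc hlt

/-- the master lemma: upper and lower bounds for `∫ Ẑ_σ - ∫ Ẑ_M` -/
lemma L1main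
    (hmeas : ∀ i, Measurable (X i))
    (hind : iIndepFun
      (fun i : {i // i ∈ Finset.Icc 1 n} => X i) ℙ)
    (hmean : ∀ i ∈ Finset.Icc 1 n, ∫ ω, X i ω = 0)
    (hr : 0 ≤ r)
    (hXb : ∀ i ∈ Finset.Icc 1 n, ∀ᵐ ω ∂ℙ, |X i ω| ≤ r)
    (hgs : 0 ≤ gs)
    (hgsb : ∀ l ∈ Finset.Icc 1 n, |g l| ≤ gs)
    (hM1 : 1 ≤ M) (hMn : M ≤ n)
    (hσ1 : ∀ ω, 1 ≤ σ ω) (hσ2 : ∀ ω, σ ω ≤ M)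
    (hσm : ∀ t, MeasurableSet[Fpast n X t] {ω | σ ω ≤ t}) :
    ((∫ ω, zhat n X g (σ ω) ω) - (∫ ω, zhat n X g M ω)
        ≤ 2*gs*(ℙ {ω | σ ω < fpt n (psum X) g ω ∧ σ ω < M}).toReal)
    ∧ ((∫ ω, X (fpt n (psum X) g ω) ω *
          ind (σ ω < fpt n (psum X) g ω ∧ fpt n (psum X) g ω ≤ M))
        - 2*gs*(ℙ {ω | σ ω < fpt n (psum X) g ω}).toReal
        ≤ (∫ ω, zhat n X g (σ ω) ω) - (∫ ω, zhat n X g M ω))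
    ∧ Integrable (fun ω => zhat n X g (σ ω) ω) ℙ := by
  have hint : ∀ i ∈ Finset.Icc 1 n, Integrable (X i) ℙ :=
    fun i hi => integrable_bdd (hmeas i) (hXb i hi)
  -- ambient measurability of σ and T
  have hσe : ∀ t, MeasurableSet {ω | σ ω = t} := by
    intro t
    rcases Nat.eq_zero_or_pos t with rfl | ht1
    · have : {ω | σ ω = 0} = {ω | σ ω ≤ 0} := by ext ω; simp [Nat.le_zero]
      rw [this]; exact Fpast_le hmeas _ (hσm 0)
    · have : {ω | σ ω = t} = {ω | σ ω ≤ t} \ {ω | σ ω ≤ t - 1} := by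
        ext ω; simp only [Set.mem_setOf_eq, Set.mem_diff]; omega
      rw [this]
      exact (Fpast_le hmeas _ (hσm t)).diff (Fpast_le hmeas _ (hσm (t-1)))
  have hσmeas : Measurable σ := measurable_of_eq_all hσe
  have hTmeas : Measurable (fpt n (psum X) g) := measurable_fpt hmeas
  -- a.e. bounds
  have hXae : ∀ᵐ ω ∂ℙ, ∀ i ∈ Finset.Icc 1 n, |X i ω| ≤ r :=
    (ae_ball_iff (Finset.Icc 1 n).countable_toSet).mpr hXb
  have hSb : ∀ᵐ ω ∂ℙ, ∀ t, t ≤ n → |psum X t ω| ≤ n * r := by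
    filter_upwards [hXae] with ω hω
    intro t htn
    calc |psum X t ω| ≤ ∑ i ∈ Finset.Icc 1 t, |X i ω| := Finset.abs_sum_le_sum_abs _ _
      _ ≤ ∑ i ∈ Finset.Icc 1 t, r := by
          refine Finset.sum_le_sum (fun i hi => ?_)
          simp only [Finset.mem_Icc] at hi
          exact hω i (Finset.mem_Icc.mpr ⟨hi.1, le_trans hi.2 htn⟩)
      _ = (t : ℝ) * r := by rw [Finset.sum_const, Nat.card_Icc]; simp [mul_comm]
      _ ≤ (n : ℝ) * r := by
          exact mul_le_mul_of_nonneg_right (Nat.cast_le.mpr htn) hr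
  have hC0 : (0:ℝ) ≤ n * r + gs := by positivity
  -- integrability of zhat's
  have int_zhat : ∀ k, 1 ≤ k → k ≤ n → Integrable (zhat n X g k) ℙ := by
    intro k hk1 hkn
    refine integrable_bdd (measurable_zhat hmeas k) (C := n * r + gs) ?_
    filter_upwards [hSb] with ω hω
    unfold zhat
    split
    · rename_i hlt
      calc |psum X k ω - g k| ≤ |psum X k ω| + |g k| := abs_sub _ _
        _ ≤ n * r + gs := add_le_add (hω k hkn) (hgsb k (Finset.mem_Icc.mpr ⟨hk1, hkn⟩))
    · simpa using hC0
  have int_Zs : Integrable (fun ω => zhat n X g (σ ω) ω) ℙ := by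
    refine integrable_bdd ?_ (C := n * r + gs) ?_
    · exact measurable_comp_time hmeas (N := M) hσ2 hσe _ (measurable_zhat hmeas)
    · filter_upwards [hSb] with ω hω
      have hk1 := hσ1 ω
      have hkn := le_trans (hσ2 ω) hMn
      show |zhat n X g (σ ω) ω| ≤ _
      unfold zhat
      split
      · rename_i hlt
        calc |psum X (σ ω) ω - g (σ ω)| ≤ |psum X (σ ω) ω| + |g (σ ω)| := abs_sub _ _
          _ ≤ n * r + gs :=
            add_le_add (hω _ hkn) (hgsb _ (Finset.mem_Icc.mpr ⟨hk1, hkn⟩))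
      · simpa using hC0
  -- past events
  have hpastE1 : ∀ k, 1 ≤ k → k ≤ M →
      MeasurableSet[Fpast n X (k-1)] {ω | σ ω < k ∧ σ ω < fpt n (psum X) g ω} := by
    intro k hk1 hkM
    have hset : {ω | σ ω < k ∧ σ ω < fpt n (psum X) g ω} =
        ⋃ t ∈ Finset.Icc 1 (k-1), ({ω | σ ω = t} ∩ {ω | t < fpt n (psum X) g ω}) := by
      ext ω
      simp only [Set.mem_setOf_eq, Set.mem_iUnion, Set.mem_inter_iff, Finset.mem_Icc]
      constructor
      · rintro ⟨h1, h2⟩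
        exact ⟨σ ω, ⟨hσ1 ω, by omega⟩, rfl, h2⟩
      · rintro ⟨t, ⟨ht1, ht2⟩, he, h3⟩
        omega
    rw [hset]
    refine MeasurableSet.biUnion (Finset.Icc 1 (k-1)).countable_toSet (fun t ht => ?_)
    have ht' : 1 ≤ t ∧ t ≤ k - 1 := Finset.mem_Icc.mp ht
    refine MeasurableSet.inter ?_ ?_
    · have hseq : {ω | σ ω = t} = {ω | σ ω ≤ t} \ {ω | σ ω ≤ t - 1} := by
        ext ω; simp only [Set.mem_setOf_eq, Set.mem_diff]; omega
      rw [hseq]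
      exact ((Fpast_mono (show t ≤ k-1 by omega)) _ (hσm t)).diff
        ((Fpast_mono (show t-1 ≤ k-1 by omega)) _ (hσm (t-1)))
    · exact Fpast_mono (show t ≤ k-1 by omega) _
        (measurableSet_lt_fpt (show t ≤ n by omega) le_rfl)
  have hpastE2 : ∀ k, 1 ≤ k → k ≤ M →
      MeasurableSet[Fpast n X (k-1)]
        {ω | fpt n (psum X) g ω < k ∧ σ ω < fpt n (psum X) g ω} := by
    intro k hk1 hkM
    have hset : {ω | fpt n (psum X) g ω < k ∧ σ ω < fpt n (psum X) g ω} =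
        ⋃ t ∈ Finset.Icc 1 (k-1),
          ({ω | fpt n (psum X) g ω = t} ∩ {ω | σ ω ≤ t - 1}) := by
      ext ω
      simp only [Set.mem_setOf_eq, Set.mem_iUnion, Set.mem_inter_iff, Finset.mem_Icc]
      constructor
      · rintro ⟨h1, h2⟩
        have hp : 0 < fpt n (psum X) g ω := fpt_pos
        exact ⟨fpt n (psum X) g ω, ⟨by omega, by omega⟩, rfl, by omega⟩
      · rintro ⟨t, ⟨ht1, ht2⟩, he, h3⟩
        omega
    rw [hset]
    refine MeasurableSet.biUnion (Finset.Icc 1 (k-1)).countable_toSet (fun t ht => ?_)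
    have ht' : 1 ≤ t ∧ t ≤ k - 1 := Finset.mem_Icc.mp ht
    refine MeasurableSet.inter ?_ ?_
    · exact Fpast_mono (show t ≤ k-1 by omega) _
        (measurableSet_fpt_eq ht'.1 (show t ≤ n by omega) le_rfl)
    · exact Fpast_mono (show t-1 ≤ k-1 by omega) _ (hσm (t-1))
  -- integrability of the martingale-difference sums
  have int_f1k : ∀ k ∈ Finset.Icc 1 M, Integrable
      (fun ω => X k ω * ind (σ ω < k ∧ σ ω < fpt n (psum X) g ω)) ℙ := by
    intro k hk
    have hk' := Finset.mem_Icc.mp hk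
    exact integrable_mul_ind (hint k (Finset.mem_Icc.mpr ⟨hk'.1, le_trans hk'.2 hMn⟩))
      (hmeas k) (Fpast_le hmeas _ (hpastE1 k hk'.1 hk'.2))
  have int_f2k : ∀ k ∈ Finset.Icc 1 M, Integrable
      (fun ω => X k ω * ind (fpt n (psum X) g ω < k ∧ σ ω < fpt n (psum X) g ω)) ℙ := by
    intro k hk
    have hk' := Finset.mem_Icc.mp hk
    exact integrable_mul_ind (hint k (Finset.mem_Icc.mpr ⟨hk'.1, le_trans hk'.2 hMn⟩))
      (hmeas k) (Fpast_le hmeas _ (hpastE2 k hk'.1 hk'.2))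
  have int_f1 : Integrable (fun ω => ∑ k ∈ Finset.Icc 1 M,
      X k ω * ind (σ ω < k ∧ σ ω < fpt n (psum X) g ω)) ℙ :=
    integrable_finset_sum _ int_f1k
  have int_f2 : Integrable (fun ω => ∑ k ∈ Finset.Icc 1 M,
      X k ω * ind (fpt n (psum X) g ω < k ∧ σ ω < fpt n (psum X) g ω)) ℙ :=
    integrable_finset_sum _ int_f2k
  have hf1zero : (∫ ω, ∑ k ∈ Finset.Icc 1 M,
      X k ω * ind (σ ω < k ∧ σ ω < fpt n (psum X) g ω)) = 0 := by
    rw [integral_finset_sum _ int_f1k]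
    refine Finset.sum_eq_zero (fun k hk => ?_)
    have hk' := Finset.mem_Icc.mp hk
    exact integral_X_mul_ind_zero hmeas hind hmean hint
      (Finset.mem_Icc.mpr ⟨hk'.1, le_trans hk'.2 hMn⟩) (hpastE1 k hk'.1 hk'.2)
  have hf2zero : (∫ ω, ∑ k ∈ Finset.Icc 1 M,
      X k ω * ind (fpt n (psum X) g ω < k ∧ σ ω < fpt n (psum X) g ω)) = 0 := by
    rw [integral_finset_sum _ int_f2k]
    refine Finset.sum_eq_zero (fun k hk => ?_)
    have hk' := Finset.mem_Icc.mp hk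
    exact integral_X_mul_ind_zero hmeas hind hmean hint
      (Finset.mem_Icc.mpr ⟨hk'.1, le_trans hk'.2 hMn⟩) (hpastE2 k hk'.1 hk'.2)
  -- measurable events
  have hE0 : MeasurableSet {ω | σ ω < fpt n (psum X) g ω} :=
    measurableSet_lt hσmeas hTmeas
  have hE1 : MeasurableSet {ω | σ ω < fpt n (psum X) g ω ∧ σ ω < M} := by
    rw [Set.setOf_and]
    exact hE0.inter (measurableSet_lt hσmeas measurable_const)
  have hEM : MeasurableSet {ω | σ ω < fpt n (psum X) g ω ∧ M < fpt n (psum X) g ω} := by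
    rw [Set.setOf_and]
    exact hE0.inter (measurableSet_lt measurable_const hTmeas)
  have hEE : MeasurableSet {ω | σ ω < fpt n (psum X) g ω ∧ fpt n (psum X) g ω ≤ M} := by
    rw [Set.setOf_and]
    exact hE0.inter (measurableSet_le hTmeas measurable_const)
  -- composite measurable functions
  have hgσ : Measurable (fun ω => g (σ ω)) :=
    measurable_comp_time hmeas (N := M) hσ2 hσe (fun t _ => g t) (fun t => measurable_const)
  have hgT : Measurable (fun ω => g (fpt n (psum X) g ω)) :=
    measurable_comp_time hmeas (N := n+1) (fun ω => fpt_le_succ)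
      (measurableSet_fpt_eq_all hmeas) (fun t _ => g t) (fun t => measurable_const)
  have hST : Measurable (fun ω => psum X (fpt n (psum X) g ω) ω) :=
    measurable_comp_time hmeas (N := n+1) (fun ω => fpt_le_succ)
      (measurableSet_fpt_eq_all hmeas) (psum X)
      (fun t => Finset.measurable_sum _ (fun i _ => hmeas i))
  have hXTm : Measurable (fun ω => X (fpt n (psum X) g ω) ω) :=
    measurable_comp_time hmeas (N := n+1) (fun ω => fpt_le_succ)
      (measurableSet_fpt_eq_all hmeas) X hmeas
  -- the G function
  have hGmeas : Measurable (fun ω =>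
      (g M - g (σ ω)) * ind (σ ω < fpt n (psum X) g ω ∧ M < fpt n (psum X) g ω)
      + (g (fpt n (psum X) g ω) - g (σ ω)) *
          ind (σ ω < fpt n (psum X) g ω ∧ fpt n (psum X) g ω ≤ M)) :=
    (((measurable_const.sub hgσ).mul (measurable_ind hEM)).add
      ((hgT.sub hgσ).mul (measurable_ind hEE)))
  have hgb' : ∀ l, 1 ≤ l → l ≤ n → -gs ≤ g l ∧ g l ≤ gs := by
    intro l h1 h2
    exact abs_le.mp (hgsb l (Finset.mem_Icc.mpr ⟨h1, h2⟩))
  have hGb : ∀ ω, |(g M - g (σ ω)) * ind (σ ω < fpt n (psum X) g ω ∧ M < fpt n (psum X) g ω)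
      + (g (fpt n (psum X) g ω) - g (σ ω)) *
          ind (σ ω < fpt n (psum X) g ω ∧ fpt n (psum X) g ω ≤ M)|
      ≤ 2*gs*ind (σ ω < fpt n (psum X) g ω ∧ σ ω < M) := by
    intro ω
    have hσn : σ ω ≤ n := le_trans (hσ2 ω) hMn
    have hσb := hgb' (σ ω) (hσ1 ω) hσn
    have hMb := hgb' M hM1 hMn
    by_cases h1 : σ ω < fpt n (psum X) g ω
    · by_cases h2 : fpt n (psum X) g ω ≤ M
      · have hTb := hgb' (fpt n (psum X) g ω) fpt_pos (le_trans h2 hMn)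
        have i1 : ind (σ ω < fpt n (psum X) g ω ∧ M < fpt n (psum X) g ω) = 0 :=
          ind_of_false (fun hc => absurd hc.2 (not_lt.mpr h2))
        have i2 : ind (σ ω < fpt n (psum X) g ω ∧ fpt n (psum X) g ω ≤ M) = 1 :=
          ind_of_true ⟨h1, h2⟩
        have i3 : ind (σ ω < fpt n (psum X) g ω ∧ σ ω < M) = 1 :=
          ind_of_true ⟨h1, by omega⟩
        rw [i1, i2, i3]
        rw [mul_zero, zero_add, mul_one, mul_one]
        exact abs_le.mpr ⟨by linarith, by linarith⟩
      · by_cases h3 : σ ω < M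
        · have i1 : ind (σ ω < fpt n (psum X) g ω ∧ M < fpt n (psum X) g ω) = 1 :=
            ind_of_true ⟨h1, not_le.mp h2⟩
          have i2 : ind (σ ω < fpt n (psum X) g ω ∧ fpt n (psum X) g ω ≤ M) = 0 :=
            ind_of_false (fun hc => absurd hc.2 h2)
          have i3 : ind (σ ω < fpt n (psum X) g ω ∧ σ ω < M) = 1 := ind_of_true ⟨h1, h3⟩
          rw [i1, i2, i3, mul_zero, add_zero, mul_one, mul_one]
          exact abs_le.mpr ⟨by linarith, by linarith⟩
        · have hσM : σ ω = M := le_antisymm (hσ2 ω) (not_lt.mp h3)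
          have i2 : ind (σ ω < fpt n (psum X) g ω ∧ fpt n (psum X) g ω ≤ M) = 0 :=
            ind_of_false (fun hc => absurd hc.2 h2)
          have i3 : ind (σ ω < fpt n (psum X) g ω ∧ σ ω < M) = 0 :=
            ind_of_false (fun hc => absurd hc.2 h3)
          rw [i2, i3, hσM, sub_self, zero_mul, mul_zero, add_zero, abs_zero, mul_zero]
    · have i1 : ind (σ ω < fpt n (psum X) g ω ∧ M < fpt n (psum X) g ω) = 0 :=
        ind_of_false (fun hc => absurd hc.1 h1)
      have i2 : ind (σ ω < fpt n (psum X) g ω ∧ fpt n (psum X) g ω ≤ M) = 0 :=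
        ind_of_false (fun hc => absurd hc.1 h1)
      have i3 : ind (σ ω < fpt n (psum X) g ω ∧ σ ω < M) = 0 :=
        ind_of_false (fun hc => absurd hc.1 h1)
      rw [i1, i2, i3, mul_zero, mul_zero, add_zero, abs_zero, mul_zero]
  have int_G : Integrable (fun ω =>
      (g M - g (σ ω)) * ind (σ ω < fpt n (psum X) g ω ∧ M < fpt n (psum X) g ω)
      + (g (fpt n (psum X) g ω) - g (σ ω)) *
          ind (σ ω < fpt n (psum X) g ω ∧ fpt n (psum X) g ω ≤ M)) ℙ := by
    refine integrable_bdd hGmeas (C := 2*gs) (Filter.Eventually.of_forall (fun ω => ?_))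
    refine le_trans (hGb ω) ?_
    calc 2*gs*ind (σ ω < fpt n (psum X) g ω ∧ σ ω < M) ≤ 2*gs*1 :=
          mul_le_mul_of_nonneg_left ind_le_one (by linarith)
      _ = 2*gs := mul_one _
  -- the Z_T function
  have hZtmeas : Measurable (fun ω =>
      (psum X (fpt n (psum X) g ω) ω - g (fpt n (psum X) g ω)) *
        ind (σ ω < fpt n (psum X) g ω ∧ fpt n (psum X) g ω ≤ M)) :=
    (hST.sub hgT).mul (measurable_ind hEE)
  have hZt_nonpos : ∀ ω, (psum X (fpt n (psum X) g ω) ω - g (fpt n (psum X) g ω)) *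
      ind (σ ω < fpt n (psum X) g ω ∧ fpt n (psum X) g ω ≤ M) ≤ 0 := by
    intro ω
    by_cases hc : σ ω < fpt n (psum X) g ω ∧ fpt n (psum X) g ω ≤ M
    · rw [ind_of_true hc, mul_one, sub_nonpos]
      exact fpt_crossing (le_trans hc.2 hMn)
    · rw [ind_of_false hc, mul_zero]
  have int_Zt : Integrable (fun ω =>
      (psum X (fpt n (psum X) g ω) ω - g (fpt n (psum X) g ω)) *
        ind (σ ω < fpt n (psum X) g ω ∧ fpt n (psum X) g ω ≤ M)) ℙ := by
    refine integrable_bdd hZtmeas (C := n*r + gs) ?_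
    filter_upwards [hSb] with ω hω
    by_cases hc : σ ω < fpt n (psum X) g ω ∧ fpt n (psum X) g ω ≤ M
    · rw [ind_of_true hc, mul_one]
      have hTn : fpt n (psum X) g ω ≤ n := le_trans hc.2 hMn
      calc |psum X (fpt n (psum X) g ω) ω - g (fpt n (psum X) g ω)|
          ≤ |psum X (fpt n (psum X) g ω) ω| + |g (fpt n (psum X) g ω)| := abs_sub _ _
        _ ≤ n*r + gs := add_le_add (hω _ hTn)
            (hgsb _ (Finset.mem_Icc.mpr ⟨fpt_pos, hTn⟩))
    · rw [ind_of_false hc, mul_zero, abs_zero]; exact hC0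
  -- the X_T function
  have int_XT : Integrable (fun ω => X (fpt n (psum X) g ω) ω *
      ind (σ ω < fpt n (psum X) g ω ∧ fpt n (psum X) g ω ≤ M)) ℙ := by
    refine integrable_bdd (hXTm.mul (measurable_ind hEE)) (C := r) ?_
    filter_upwards [hXae] with ω hω
    by_cases hc : σ ω < fpt n (psum X) g ω ∧ fpt n (psum X) g ω ≤ M
    · rw [ind_of_true hc, mul_one]
      exact hω _ (Finset.mem_Icc.mpr ⟨fpt_pos, le_trans hc.2 hMn⟩)
    · rw [ind_of_false hc, mul_zero, abs_zero]; exact hr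
  -- the key identity
  have hfe : (fun ω => zhat n X g (σ ω) ω - zhat n X g M ω) = (fun ω =>
      -(∑ k ∈ Finset.Icc 1 M, X k ω * ind (σ ω < k ∧ σ ω < fpt n (psum X) g ω))
      + (∑ k ∈ Finset.Icc 1 M, X k ω * ind (fpt n (psum X) g ω < k ∧ σ ω < fpt n (psum X) g ω))
      + ((g M - g (σ ω)) * ind (σ ω < fpt n (psum X) g ω ∧ M < fpt n (psum X) g ω)
         + (g (fpt n (psum X) g ω) - g (σ ω)) *
            ind (σ ω < fpt n (psum X) g ω ∧ fpt n (psum X) g ω ≤ M))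
      + (psum X (fpt n (psum X) g ω) ω - g (fpt n (psum X) g ω)) *
          ind (σ ω < fpt n (psum X) g ω ∧ fpt n (psum X) g ω ≤ M)) :=
    funext (pointwise_key hMn hσ2)
  have J1 : Integrable (fun ω => -(∑ k ∈ Finset.Icc 1 M,
      X k ω * ind (σ ω < k ∧ σ ω < fpt n (psum X) g ω))) ℙ := int_f1.neg
  have J2 : Integrable (fun ω => -(∑ k ∈ Finset.Icc 1 M,
      X k ω * ind (σ ω < k ∧ σ ω < fpt n (psum X) g ω))
      + (∑ k ∈ Finset.Icc 1 M,
          X k ω * ind (fpt n (psum X) g ω < k ∧ σ ω < fpt n (psum X) g ω))) ℙ :=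
    J1.add int_f2
  have J3 : Integrable (fun ω => -(∑ k ∈ Finset.Icc 1 M,
      X k ω * ind (σ ω < k ∧ σ ω < fpt n (psum X) g ω))
      + (∑ k ∈ Finset.Icc 1 M,
          X k ω * ind (fpt n (psum X) g ω < k ∧ σ ω < fpt n (psum X) g ω))
      + ((g M - g (σ ω)) * ind (σ ω < fpt n (psum X) g ω ∧ M < fpt n (psum X) g ω)
         + (g (fpt n (psum X) g ω) - g (σ ω)) *
            ind (σ ω < fpt n (psum X) g ω ∧ fpt n (psum X) g ω ≤ M))) ℙ := J2.add int_G
  have K1 : ∫ ω, (-(∑ k ∈ Finset.Icc 1 M, X k ω * ind (σ ω < k ∧ σ ω < fpt n (psum X) g ω))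
      + (∑ k ∈ Finset.Icc 1 M, X k ω * ind (fpt n (psum X) g ω < k ∧ σ ω < fpt n (psum X) g ω))
      + ((g M - g (σ ω)) * ind (σ ω < fpt n (psum X) g ω ∧ M < fpt n (psum X) g ω)
         + (g (fpt n (psum X) g ω) - g (σ ω)) *
            ind (σ ω < fpt n (psum X) g ω ∧ fpt n (psum X) g ω ≤ M))
      + (psum X (fpt n (psum X) g ω) ω - g (fpt n (psum X) g ω)) *
          ind (σ ω < fpt n (psum X) g ω ∧ fpt n (psum X) g ω ≤ M))
      = (∫ ω, (-(∑ k ∈ Finset.Icc 1 M, X k ω * ind (σ ω < k ∧ σ ω < fpt n (psum X) g ω))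
      + (∑ k ∈ Finset.Icc 1 M, X k ω * ind (fpt n (psum X) g ω < k ∧ σ ω < fpt n (psum X) g ω))
      + ((g M - g (σ ω)) * ind (σ ω < fpt n (psum X) g ω ∧ M < fpt n (psum X) g ω)
         + (g (fpt n (psum X) g ω) - g (σ ω)) *
            ind (σ ω < fpt n (psum X) g ω ∧ fpt n (psum X) g ω ≤ M))))
      + ∫ ω, (psum X (fpt n (psum X) g ω) ω - g (fpt n (psum X) g ω)) *
          ind (σ ω < fpt n (psum X) g ω ∧ fpt n (psum X) g ω ≤ M) :=
    integral_add J3 int_Zt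
  have K2 : ∫ ω, (-(∑ k ∈ Finset.Icc 1 M, X k ω * ind (σ ω < k ∧ σ ω < fpt n (psum X) g ω))
      + (∑ k ∈ Finset.Icc 1 M, X k ω * ind (fpt n (psum X) g ω < k ∧ σ ω < fpt n (psum X) g ω))
      + ((g M - g (σ ω)) * ind (σ ω < fpt n (psum X) g ω ∧ M < fpt n (psum X) g ω)
         + (g (fpt n (psum X) g ω) - g (σ ω)) *
            ind (σ ω < fpt n (psum X) g ω ∧ fpt n (psum X) g ω ≤ M)))
      = (∫ ω, (-(∑ k ∈ Finset.Icc 1 M, X k ω * ind (σ ω < k ∧ σ ω < fpt n (psum X) g ω))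
      + (∑ k ∈ Finset.Icc 1 M, X k ω * ind (fpt n (psum X) g ω < k ∧ σ ω < fpt n (psum X) g ω))))
      + ∫ ω, ((g M - g (σ ω)) * ind (σ ω < fpt n (psum X) g ω ∧ M < fpt n (psum X) g ω)
         + (g (fpt n (psum X) g ω) - g (σ ω)) *
            ind (σ ω < fpt n (psum X) g ω ∧ fpt n (psum X) g ω ≤ M)) :=
    integral_add J2 int_G
  have K3 : ∫ ω, (-(∑ k ∈ Finset.Icc 1 M, X k ω * ind (σ ω < k ∧ σ ω < fpt n (psum X) g ω))
      + (∑ k ∈ Finset.Icc 1 M, X k ω * ind (fpt n (psum X) g ω < k ∧ σ ω < fpt n (psum X) g ω)))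
      = (∫ ω, -(∑ k ∈ Finset.Icc 1 M, X k ω * ind (σ ω < k ∧ σ ω < fpt n (psum X) g ω)))
      + ∫ ω, (∑ k ∈ Finset.Icc 1 M,
          X k ω * ind (fpt n (psum X) g ω < k ∧ σ ω < fpt n (psum X) g ω)) :=
    integral_add J1 int_f2
  have K4 : (∫ ω, -(∑ k ∈ Finset.Icc 1 M, X k ω * ind (σ ω < k ∧ σ ω < fpt n (psum X) g ω)))
      = -∫ ω, (∑ k ∈ Finset.Icc 1 M, X k ω * ind (σ ω < k ∧ σ ω < fpt n (psum X) g ω)) :=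
    integral_neg _
  have e0 : ∫ ω, (zhat n X g (σ ω) ω - zhat n X g M ω)
      = (∫ ω, zhat n X g (σ ω) ω) - ∫ ω, zhat n X g M ω :=
    integral_sub int_Zs (int_zhat M hM1 hMn)
  have e1 : ∫ ω, (zhat n X g (σ ω) ω - zhat n X g M ω) = ∫ ω,
      (-(∑ k ∈ Finset.Icc 1 M, X k ω * ind (σ ω < k ∧ σ ω < fpt n (psum X) g ω))
      + (∑ k ∈ Finset.Icc 1 M, X k ω * ind (fpt n (psum X) g ω < k ∧ σ ω < fpt n (psum X) g ω))
      + ((g M - g (σ ω)) * ind (σ ω < fpt n (psum X) g ω ∧ M < fpt n (psum X) g ω)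
         + (g (fpt n (psum X) g ω) - g (σ ω)) *
            ind (σ ω < fpt n (psum X) g ω ∧ fpt n (psum X) g ω ≤ M))
      + (psum X (fpt n (psum X) g ω) ω - g (fpt n (psum X) g ω)) *
          ind (σ ω < fpt n (psum X) g ω ∧ fpt n (psum X) g ω ≤ M)) := by
    rw [hfe]
  have key : (∫ ω, zhat n X g (σ ω) ω) - (∫ ω, zhat n X g M ω) =
      (∫ ω, ((g M - g (σ ω)) * ind (σ ω < fpt n (psum X) g ω ∧ M < fpt n (psum X) g ω)
        + (g (fpt n (psum X) g ω) - g (σ ω)) *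
            ind (σ ω < fpt n (psum X) g ω ∧ fpt n (psum X) g ω ≤ M)))
      + ∫ ω, (psum X (fpt n (psum X) g ω) ω - g (fpt n (psum X) g ω)) *
          ind (σ ω < fpt n (psum X) g ω ∧ fpt n (psum X) g ω ≤ M) := by
    rw [← e0, e1, K1, K2, K3, K4, hf1zero, hf2zero]
    ring
  refine ⟨?_, ?_, int_Zs⟩
  · -- upper bound
    rw [key]
    have h1 : (∫ ω, (psum X (fpt n (psum X) g ω) ω - g (fpt n (psum X) g ω)) *
        ind (σ ω < fpt n (psum X) g ω ∧ fpt n (psum X) g ω ≤ M)) ≤ 0 :=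
      integral_nonpos hZt_nonpos
    have h2 : (∫ ω, ((g M - g (σ ω)) * ind (σ ω < fpt n (psum X) g ω ∧ M < fpt n (psum X) g ω)
        + (g (fpt n (psum X) g ω) - g (σ ω)) *
            ind (σ ω < fpt n (psum X) g ω ∧ fpt n (psum X) g ω ≤ M)))
        ≤ ∫ ω, 2*gs*ind (σ ω < fpt n (psum X) g ω ∧ σ ω < M) := by
      refine integral_mono int_G ((integrable_ind hE1).const_mul (2*gs)) ?_
      intro ω
      exact le_trans (le_abs_self _) (hGb ω)
    have h3 : (∫ ω, 2*gs*ind (σ ω < fpt n (psum X) g ω ∧ σ ω < M))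
        = 2*gs*(ℙ {ω | σ ω < fpt n (psum X) g ω ∧ σ ω < M}).toReal := by
      rw [MeasureTheory.integral_const_mul, integral_ind_eq hE1]
    linarith
  · -- lower bound
    rw [key]
    have hpt : ∀ ω, X (fpt n (psum X) g ω) ω *
        ind (σ ω < fpt n (psum X) g ω ∧ fpt n (psum X) g ω ≤ M)
        - 2*gs*ind (σ ω < fpt n (psum X) g ω)
        ≤ ((g M - g (σ ω)) * ind (σ ω < fpt n (psum X) g ω ∧ M < fpt n (psum X) g ω)
          + (g (fpt n (psum X) g ω) - g (σ ω)) *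
              ind (σ ω < fpt n (psum X) g ω ∧ fpt n (psum X) g ω ≤ M))
          + (psum X (fpt n (psum X) g ω) ω - g (fpt n (psum X) g ω)) *
              ind (σ ω < fpt n (psum X) g ω ∧ fpt n (psum X) g ω ≤ M) := by
      intro ω
      have hσn : σ ω ≤ n := le_trans (hσ2 ω) hMn
      have hσb := hgb' (σ ω) (hσ1 ω) hσn
      have hMb := hgb' M hM1 hMn
      by_cases h1 : σ ω < fpt n (psum X) g ω
      · by_cases h2 : fpt n (psum X) g ω ≤ M
        · have hTn : fpt n (psum X) g ω ≤ n := le_trans h2 hMn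
          have hT2 : 2 ≤ fpt n (psum X) g ω := by have := hσ1 ω; omega
          have hTm1b := hgb' (fpt n (psum X) g ω - 1) (by omega) (by omega)
          have hS : psum X (fpt n (psum X) g ω) ω =
              psum X (fpt n (psum X) g ω - 1) ω + X (fpt n (psum X) g ω) ω :=
            psum_sub_one (by omega) ω
          have hprev : g (fpt n (psum X) g ω - 1) < psum X (fpt n (psum X) g ω - 1) ω :=
            (lt_fpt_iff (show fpt n (psum X) g ω - 1 ≤ n by omega)).mp
              (by omega) _ (by omega) le_rfl
          have i1 : ind (σ ω < fpt n (psum X) g ω ∧ M < fpt n (psum X) g ω) = 0 :=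
            ind_of_false (fun hc => absurd hc.2 (not_lt.mpr h2))
          have i2 : ind (σ ω < fpt n (psum X) g ω ∧ fpt n (psum X) g ω ≤ M) = 1 :=
            ind_of_true ⟨h1, h2⟩
          have i3 : ind (σ ω < fpt n (psum X) g ω) = 1 := ind_of_true h1
          rw [i1, i2, i3, mul_zero, zero_add, mul_one, mul_one, mul_one, mul_one]
          linarith
        · have i1 : ind (σ ω < fpt n (psum X) g ω ∧ M < fpt n (psum X) g ω) = 1 :=
            ind_of_true ⟨h1, not_le.mp h2⟩
          have i2 : ind (σ ω < fpt n (psum X) g ω ∧ fpt n (psum X) g ω ≤ M) = 0 :=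
            ind_of_false (fun hc => absurd hc.2 h2)
          have i3 : ind (σ ω < fpt n (psum X) g ω) = 1 := ind_of_true h1
          rw [i1, i2, i3]
          simp only [mul_zero, mul_one, add_zero, zero_add, sub_zero, zero_sub]
          linarith
      · have i1 : ind (σ ω < fpt n (psum X) g ω ∧ M < fpt n (psum X) g ω) = 0 :=
          ind_of_false (fun hc => absurd hc.1 h1)
        have i2 : ind (σ ω < fpt n (psum X) g ω ∧ fpt n (psum X) g ω ≤ M) = 0 :=
          ind_of_false (fun hc => absurd hc.1 h1)
        have i3 : ind (σ ω < fpt n (psum X) g ω) = 0 := ind_of_false h1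
        rw [i1, i2, i3]
        simp only [mul_zero, mul_one, add_zero, zero_add, sub_zero, zero_sub]
        exact le_refl 0
    have hmono := integral_mono
      (f := fun ω => X (fpt n (psum X) g ω) ω *
          ind (σ ω < fpt n (psum X) g ω ∧ fpt n (psum X) g ω ≤ M)
          - 2*gs*ind (σ ω < fpt n (psum X) g ω))
      (g := fun ω => ((g M - g (σ ω)) * ind (σ ω < fpt n (psum X) g ω ∧ M < fpt n (psum X) g ω)
          + (g (fpt n (psum X) g ω) - g (σ ω)) *
              ind (σ ω < fpt n (psum X) g ω ∧ fpt n (psum X) g ω ≤ M))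
          + (psum X (fpt n (psum X) g ω) ω - g (fpt n (psum X) g ω)) *
              ind (σ ω < fpt n (psum X) g ω ∧ fpt n (psum X) g ω ≤ M))
      (by exact int_XT.sub ((integrable_ind hE0).const_mul (2*gs)))
      (by exact int_G.add int_Zt) hpt
    have h4 : ∫ ω, (X (fpt n (psum X) g ω) ω *
          ind (σ ω < fpt n (psum X) g ω ∧ fpt n (psum X) g ω ≤ M)
          - 2*gs*ind (σ ω < fpt n (psum X) g ω))
        = (∫ ω, X (fpt n (psum X) g ω) ω *
            ind (σ ω < fpt n (psum X) g ω ∧ fpt n (psum X) g ω ≤ M))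
          - ∫ ω, 2*gs*ind (σ ω < fpt n (psum X) g ω) :=
      integral_sub int_XT ((integrable_ind hE0).const_mul (2*gs))
    have h5 : (∫ ω, 2*gs*ind (σ ω < fpt n (psum X) g ω))
        = 2*gs*(ℙ {ω | σ ω < fpt n (psum X) g ω}).toReal := by
      rw [MeasureTheory.integral_const_mul, integral_ind_eq hE0]
    have h6 : ∫ ω, (((g M - g (σ ω)) * ind (σ ω < fpt n (psum X) g ω ∧ M < fpt n (psum X) g ω)
          + (g (fpt n (psum X) g ω) - g (σ ω)) *
              ind (σ ω < fpt n (psum X) g ω ∧ fpt n (psum X) g ω ≤ M))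
          + (psum X (fpt n (psum X) g ω) ω - g (fpt n (psum X) g ω)) *
              ind (σ ω < fpt n (psum X) g ω ∧ fpt n (psum X) g ω ≤ M))
        = (∫ ω, ((g M - g (σ ω)) * ind (σ ω < fpt n (psum X) g ω ∧ M < fpt n (psum X) g ω)
          + (g (fpt n (psum X) g ω) - g (σ ω)) *
              ind (σ ω < fpt n (psum X) g ω ∧ fpt n (psum X) g ω ≤ M)))
          + ∫ ω, (psum X (fpt n (psum X) g ω) ω - g (fpt n (psum X) g ω)) *
              ind (σ ω < fpt n (psum X) g ω ∧ fpt n (psum X) g ω ≤ M) :=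
      integral_add int_G int_Zt
    rw [h4, h5, h6] at hmono
    linarith

end MainLemma
section Delta

variable {Ω : Type*} [MeasureSpace Ω] [IsProbabilityMeasure (ℙ : Measure Ω)]
variable {n : ℕ} {X : ℕ → Ω → ℝ} {g : ℕ → ℝ} {σ : Ω → ℕ} {r : ℝ}

lemma toReal_mono_meas {s t : Set Ω} (h : s ⊆ t) : (ℙ s).toReal ≤ (ℙ t).toReal :=
  ENNReal.toReal_mono (measure_ne_top _ _) (measure_mono h)

lemma delta_repr (hmeas : ∀ i, Measurable (X i)) :
    (fun ω => X (fpt n (psum X) g ω) ω *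
      ind (σ ω < fpt n (psum X) g ω ∧ fpt n (psum X) g ω ≤ n)) =
    (fun ω => ∑ t ∈ Finset.Icc 1 n,
      X t ω * ind (σ ω < t ∧ fpt n (psum X) g ω = t)) := by
  funext ω
  by_cases hTn : fpt n (psum X) g ω ≤ n
  · rw [Finset.sum_eq_single (fpt n (psum X) g ω)]
    · congr 1
      refine ind_congr ?_
      constructor
      · rintro ⟨h1, _⟩; exact ⟨h1, rfl⟩
      · rintro ⟨h1, _⟩; exact ⟨h1, hTn⟩
    · intro b _ hb
      rw [ind_of_false (P := σ ω < b ∧ fpt n (psum X) g ω = b)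
        (fun hc => hb hc.2.symm), mul_zero]
    · intro hc
      exact absurd (Finset.mem_Icc.mpr ⟨fpt_pos, hTn⟩) hc
  · rw [ind_of_false (fun hc => hTn hc.2), mul_zero]
    refine (Finset.sum_eq_zero (fun t ht => ?_)).symm
    have ht' := Finset.mem_Icc.mp ht
    rw [ind_of_false (P := σ ω < t ∧ fpt n (psum X) g ω = t)
      (fun hc => hTn (le_of_eq_of_le hc.2 ht'.2)), mul_zero]

lemma delta_nonpos
    (hmeas : ∀ i, Measurable (X i))
    (hind : iIndepFun
      (fun i : {i // i ∈ Finset.Icc 1 n} => X i) ℙ)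
    (hmean : ∀ i ∈ Finset.Icc 1 n, ∫ ω, X i ω = 0)
    (hint : ∀ i ∈ Finset.Icc 1 n, Integrable (X i) ℙ)
    (hσm : ∀ t, MeasurableSet[Fpast n X t] {ω | σ ω ≤ t}) :
    (∫ ω, X (fpt n (psum X) g ω) ω *
      ind (σ ω < fpt n (psum X) g ω ∧ fpt n (psum X) g ω ≤ n)) ≤ 0 := by
  rw [delta_repr hmeas]
  have hmem : ∀ t, 1 ≤ t → t ≤ n →
      MeasurableSet {ω | σ ω < t ∧ fpt n (psum X) g ω = t} := by
    intro t ht1 ht2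
    rw [Set.setOf_and]
    refine MeasurableSet.inter ?_ ?_
    · have : {ω | σ ω < t} = {ω | σ ω ≤ t - 1} := by
        ext ω; simp only [Set.mem_setOf_eq]; omega
      rw [this]
      exact Fpast_le hmeas _ (hσm (t-1))
    · exact measurableSet_fpt_eq_all hmeas t
  have hintk : ∀ t ∈ Finset.Icc 1 n, Integrable
      (fun ω => X t ω * ind (σ ω < t ∧ fpt n (psum X) g ω = t)) ℙ := by
    intro t ht
    have ht' := Finset.mem_Icc.mp ht
    exact integrable_mul_ind (hint t ht) (hmeas t) (hmem t ht'.1 ht'.2)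
  rw [integral_finset_sum _ hintk]
  refine Finset.sum_nonpos (fun t ht => ?_)
  have ht' := Finset.mem_Icc.mp ht
  have ht1 := ht'.1
  have ht2 := ht'.2
  -- the dominating past event
  have hpast : MeasurableSet[Fpast n X (t-1)]
      {ω | σ ω ≤ t - 1 ∧ (t - 1 < fpt n (psum X) g ω ∧ psum X (t-1) ω ≤ g t)} := by
    rw [Set.setOf_and]
    refine MeasurableSet.inter (hσm (t-1)) ?_
    rw [Set.setOf_and]
    refine MeasurableSet.inter ?_ ?_
    · exact measurableSet_lt_fpt (by omega) le_rfl
    · exact measurableSet_le (measurable_psum_past le_rfl (by omega)) measurable_const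
  have hzero : ∫ ω, X t ω *
      ind (σ ω ≤ t - 1 ∧ (t - 1 < fpt n (psum X) g ω ∧ psum X (t-1) ω ≤ g t)) = 0 :=
    integral_X_mul_ind_zero hmeas hind hmean hint ht hpast
  have hpt : ∀ ω, X t ω * ind (σ ω < t ∧ fpt n (psum X) g ω = t)
      ≤ X t ω * ind (σ ω ≤ t - 1 ∧ (t - 1 < fpt n (psum X) g ω ∧ psum X (t-1) ω ≤ g t)) := by
    intro ω
    have hsplit : psum X t ω = psum X (t-1) ω + X t ω := psum_sub_one ht1 ω
    by_cases hA : σ ω < t ∧ fpt n (psum X) g ω = t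
    · have hcr : psum X (fpt n (psum X) g ω) ω ≤ g (fpt n (psum X) g ω) :=
        fpt_crossing (by omega)
      rw [hA.2] at hcr
      rw [ind_of_true hA, mul_one]
      by_cases hX : psum X (t-1) ω ≤ g t
      · rw [ind_of_true ⟨by omega, by omega, hX⟩, mul_one]
      · rw [ind_of_false (fun hc2 => hX hc2.2.2), mul_zero]
        linarith
    · rw [ind_of_false hA, mul_zero]
      by_cases hB : σ ω ≤ t - 1 ∧ (t - 1 < fpt n (psum X) g ω ∧ psum X (t-1) ω ≤ g t)
      · rw [ind_of_true hB, mul_one]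
        have hTt : t < fpt n (psum X) g ω := by
          have h1 := hB.1
          have h2 := hB.2.1
          have : fpt n (psum X) g ω ≠ t := fun hc => hA ⟨by omega, hc⟩
          omega
        have hgt : g t < psum X t ω := (lt_fpt_iff ht2).mp (by omega) t ht1 le_rfl
        have := hB.2.2
        linarith
      · rw [ind_of_false hB, mul_zero]
  calc (∫ ω, X t ω * ind (σ ω < t ∧ fpt n (psum X) g ω = t))
      ≤ ∫ ω, X t ω * ind (σ ω ≤ t - 1 ∧
          (t - 1 < fpt n (psum X) g ω ∧ psum X (t-1) ω ≤ g t)) := by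
        refine integral_mono (hintk t ht) ?_ hpt
        exact integrable_mul_ind (hint t ht) (hmeas t)
          (Fpast_le hmeas _ hpast)
    _ = 0 := hzero

lemma delta_lowerbound
    (hmeas : ∀ i, Measurable (X i))
    (hr : 0 ≤ r)
    (hXb : ∀ i ∈ Finset.Icc 1 n, ∀ᵐ ω ∂ℙ, |X i ω| ≤ r)
    (hE : MeasurableSet {ω | σ ω < fpt n (psum X) g ω ∧ fpt n (psum X) g ω ≤ n}) :
    -r * (ℙ {ω | σ ω < fpt n (psum X) g ω ∧ fpt n (psum X) g ω ≤ n}).toReal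
      ≤ ∫ ω, X (fpt n (psum X) g ω) ω *
          ind (σ ω < fpt n (psum X) g ω ∧ fpt n (psum X) g ω ≤ n) := by
  have hXae : ∀ᵐ ω ∂ℙ, ∀ i ∈ Finset.Icc 1 n, |X i ω| ≤ r :=
    (ae_ball_iff (Finset.Icc 1 n).countable_toSet).mpr hXb
  have hXTm : Measurable (fun ω => X (fpt n (psum X) g ω) ω) :=
    measurable_comp_time hmeas (N := n+1) (fun ω => fpt_le_succ)
      (measurableSet_fpt_eq_all hmeas) X hmeas
  have hintXT : Integrable (fun ω => X (fpt n (psum X) g ω) ω *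
      ind (σ ω < fpt n (psum X) g ω ∧ fpt n (psum X) g ω ≤ n)) ℙ := by
    refine integrable_bdd (hXTm.mul (measurable_ind hE)) (C := r) ?_
    filter_upwards [hXae] with ω hω
    by_cases hc : σ ω < fpt n (psum X) g ω ∧ fpt n (psum X) g ω ≤ n
    · rw [ind_of_true hc, mul_one]
      exact hω _ (Finset.mem_Icc.mpr ⟨fpt_pos, hc.2⟩)
    · rw [ind_of_false hc, mul_zero, abs_zero]; exact hr
  have hmono : (∫ ω, -r * ind (σ ω < fpt n (psum X) g ω ∧ fpt n (psum X) g ω ≤ n))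
      ≤ ∫ ω, X (fpt n (psum X) g ω) ω *
          ind (σ ω < fpt n (psum X) g ω ∧ fpt n (psum X) g ω ≤ n) := by
    refine integral_mono_ae ((integrable_ind hE).const_mul (-r)) hintXT ?_
    filter_upwards [hXae] with ω hω
    by_cases hc : σ ω < fpt n (psum X) g ω ∧ fpt n (psum X) g ω ≤ n
    · rw [ind_of_true hc, mul_one, mul_one]
      have := hω _ (Finset.mem_Icc.mpr ⟨fpt_pos, hc.2⟩)
      have := abs_le.mp this
      linarith [this.1]
    · rw [ind_of_false hc, mul_zero, mul_zero]
  rw [MeasureTheory.integral_const_mul, integral_ind_eq hE] at hmono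
  exact hmono

end Delta

section GsBound

lemma biSup_abs_facts {n : ℕ} (g : ℕ → ℝ) (hn : 1 ≤ n) :
    (∀ k ∈ Finset.Icc 1 n, |g k| ≤ ⨆ k ∈ Finset.Icc 1 n, |g k|) ∧
      (0 : ℝ) ≤ ⨆ k ∈ Finset.Icc 1 n, |g k| := by
  set B : ℝ := ∑ i ∈ Finset.Icc 1 n, |g i| with hB
  have hFle : ∀ k, (⨆ _ : k ∈ Finset.Icc 1 n, |g k|) ≤ B := by
    intro k
    by_cases hk : k ∈ Finset.Icc 1 n
    · haveI : Nonempty (k ∈ Finset.Icc 1 n) := ⟨hk⟩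
      rw [ciSup_const]
      exact Finset.single_le_sum (fun i _ => abs_nonneg (g i)) hk
    · haveI : IsEmpty (k ∈ Finset.Icc 1 n) := ⟨hk⟩
      rw [Real.iSup_of_isEmpty]
      exact Finset.sum_nonneg (fun i _ => abs_nonneg (g i))
  have hbdd : BddAbove (Set.range (fun k => ⨆ _ : k ∈ Finset.Icc 1 n, |g k|)) := by
    refine ⟨B, ?_⟩
    rintro x ⟨k, rfl⟩
    exact hFle k
  have hle : ∀ k ∈ Finset.Icc 1 n, |g k| ≤ ⨆ k ∈ Finset.Icc 1 n, |g k| := by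
    intro k hk
    haveI : Nonempty (k ∈ Finset.Icc 1 n) := ⟨hk⟩
    calc |g k| = ⨆ _ : k ∈ Finset.Icc 1 n, |g k| := (ciSup_const).symm
      _ ≤ ⨆ k ∈ Finset.Icc 1 n, |g k| := le_ciSup hbdd k
  refine ⟨hle, ?_⟩
  calc (0:ℝ) ≤ |g 1| := abs_nonneg _
    _ ≤ ⨆ k ∈ Finset.Icc 1 n, |g k| := hle 1 (Finset.mem_Icc.mpr ⟨le_rfl, hn⟩)

end GsBound

/-- Lemma 5: estimates for `E[Ẑ_{ν(h)∧m}]` and related quantities. -/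
theorem stmt_16 {Ω : Type*} [MeasureSpace Ω] [IsProbabilityMeasure (ℙ : Measure Ω)]
    (n m : ℕ) (X : ℕ → Ω → ℝ) (g : ℕ → ℝ) (r h gs Bm En κ δ : ℝ)
    (hmeas : ∀ i, Measurable (X i))
    (hind : iIndepFun
      (fun i : {i // i ∈ Finset.Icc 1 n} => X i) ℙ)
    (hmean : ∀ i ∈ Finset.Icc 1 n, ∫ ω, X i ω = 0)
    (hvar : (∑ i ∈ Finset.Icc 1 n, ∫ ω, (X i ω) ^ 2) = 1)
    (hr : 0 < r)
    (hbdd : ∀ i ∈ Finset.Icc 1 n, ∀ᵐ ω ∂ℙ, |X i ω| ≤ r)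
    (hm1 : 1 ≤ m) (hmn : m ≤ n) (hh : 0 < h)
    (hgs : gs = ⨆ k ∈ Finset.Icc 1 n, |g k|)
    (hBm : Bm = Real.sqrt (∑ i ∈ Finset.Icc 1 m, ∫ ω, (X i ω) ^ 2))
    (hEn : En = ∫ ω, zhat n X g n ω)
    (hκ : κ = 2 / h + 4 / Bm)
    (hδ : δ = ∫ ω in {ω | min (nuTime n X g h ω) m < fpt n (psum X) g ω ∧
        fpt n (psum X) g ω ≤ n}, X (fpt n (psum X) g ω) ω)
    (hPm : (ℙ {ω | m < fpt n (psum X) g ω}).toReal ≤ 3 * (∫ ω, zhat n X g m ω) / Bm)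
    (h24 : 24 * gs ≤ Bm)
    (h6 : 6 * gs ≤ h) :
    (2 * ∫ ω, zhat n X g (min (nuTime n X g h ω) m) ω ≤ 3 * ∫ ω, zhat n X g m ω)
    ∧ (3 * ∫ ω, zhat n X g m ω ≤ 4 * En)
    ∧ ((ℙ {ω | 0 < zhat n X g (min (nuTime n X g h ω) m) ω}).toReal ≤ κ * En)
    ∧ ((∫ ω, zhat n X g (min (nuTime n X g h ω) m) ω) - En ≤ 2 * κ * gs * En)
    ∧ (δ - 2 * κ * gs * En ≤ (∫ ω, zhat n X g (min (nuTime n X g h ω) m) ω) - En)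
    ∧ (δ ≤ 0)
    ∧ (-(κ * r * En) ≤ δ) := by
  have hn1 : 1 ≤ n := le_trans hm1 hmn
  have hgsb : ∀ l ∈ Finset.Icc 1 n, |g l| ≤ gs := by
    intro l hl; rw [hgs]; exact (biSup_abs_facts g hn1).1 l hl
  have hgs0 : 0 ≤ gs := by rw [hgs]; exact (biSup_abs_facts g hn1).2
  have hr0 : 0 ≤ r := hr.le
  have hint : ∀ i ∈ Finset.Icc 1 n, Integrable (X i) ℙ :=
    fun i hi => integrable_bdd (hmeas i) (hbdd i hi)
  have hτ1 : ∀ ω : Ω, 1 ≤ min (nuTime n X g h ω) m :=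
    fun ω => le_min nuTime_pos hm1
  have hτm : ∀ ω : Ω, min (nuTime n X g h ω) m ≤ m := fun ω => min_le_right _ _
  have hτn : ∀ ω : Ω, min (nuTime n X g h ω) m ≤ n :=
    fun ω => le_trans (min_le_right _ _) hmn
  have hσmτ : ∀ t, MeasurableSet[Fpast n X t] {ω | min (nuTime n X g h ω) m ≤ t} :=
    fun t => measurableSet_tau_le le_rfl
  have hσmc : ∀ t, MeasurableSet[Fpast n X t] {ω : Ω | m ≤ t} := by
    intro t
    by_cases hc : m ≤ t
    · have he : {ω : Ω | m ≤ t} = Set.univ := by ext ω; simp [hc]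
      rw [he]; exact @MeasurableSet.univ Ω (Fpast n X t)
    · have he : {ω : Ω | m ≤ t} = ∅ := by ext ω; simp [hc]
      rw [he]; exact @MeasurableSet.empty Ω (Fpast n X t)
  -- the three instances of the master lemma
  obtain ⟨CA0, -, -⟩ := L1main (σ := fun _ => m) (M := n) hmeas hind hmean hr0 hbdd hgs0
    hgsb hn1 le_rfl (fun _ => hm1) (fun _ => hmn) hσmc
  have CA : (∫ ω, zhat n X g m ω) - (∫ ω, zhat n X g n ω)
      ≤ 2*gs*(ℙ {ω | m < fpt n (psum X) g ω ∧ m < n}).toReal := CA0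
  obtain ⟨CB0, -, intZτ0⟩ := L1main (σ := fun ω => min (nuTime n X g h ω) m) (M := m)
    hmeas hind hmean hr0 hbdd hgs0 hgsb hm1 hmn hτ1 hτm hσmτ
  have CB : (∫ ω, zhat n X g (min (nuTime n X g h ω) m) ω) - (∫ ω, zhat n X g m ω)
      ≤ 2*gs*(ℙ {ω | min (nuTime n X g h ω) m < fpt n (psum X) g ω ∧
          min (nuTime n X g h ω) m < m}).toReal := CB0
  have intZτ : Integrable (fun ω => zhat n X g (min (nuTime n X g h ω) m) ω) ℙ := intZτ0
  obtain ⟨CC0, CD0, -⟩ := L1main (σ := fun ω => min (nuTime n X g h ω) m) (M := n)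
    hmeas hind hmean hr0 hbdd hgs0 hgsb hn1 le_rfl hτ1 hτn hσmτ
  have CC : (∫ ω, zhat n X g (min (nuTime n X g h ω) m) ω) - (∫ ω, zhat n X g n ω)
      ≤ 2*gs*(ℙ {ω | min (nuTime n X g h ω) m < fpt n (psum X) g ω ∧
          min (nuTime n X g h ω) m < n}).toReal := CC0
  have CD : (∫ ω, X (fpt n (psum X) g ω) ω *
        ind (min (nuTime n X g h ω) m < fpt n (psum X) g ω ∧ fpt n (psum X) g ω ≤ n))
      - 2*gs*(ℙ {ω | min (nuTime n X g h ω) m < fpt n (psum X) g ω}).toReal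
      ≤ (∫ ω, zhat n X g (min (nuTime n X g h ω) m) ω) - (∫ ω, zhat n X g n ω) := CD0
  clear CA0 CB0 CC0 CD0 intZτ0
  -- measurable sets
  have hτmeas : Measurable (fun ω => min (nuTime n X g h ω) m) :=
    measurable_of_eq_all (measurableSet_tau_eq_all hmeas)
  have hTmeas : Measurable (fpt n (psum X) g) := measurable_fpt hmeas
  have hP0set : MeasurableSet {ω | min (nuTime n X g h ω) m < fpt n (psum X) g ω} :=
    measurableSet_lt hτmeas hTmeas
  have hQBset : MeasurableSet {ω | min (nuTime n X g h ω) m < fpt n (psum X) g ω ∧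
      min (nuTime n X g h ω) m < m} := by
    rw [Set.setOf_and]; exact hP0set.inter (measurableSet_lt hτmeas measurable_const)
  have hEset : MeasurableSet {ω | min (nuTime n X g h ω) m < fpt n (psum X) g ω ∧
      fpt n (psum X) g ω ≤ n} := by
    rw [Set.setOf_and]; exact hP0set.inter (measurableSet_le hTmeas measurable_const)
  have hpmset : MeasurableSet {ω | m < fpt n (psum X) g ω} :=
    Fpast_le hmeas _ (measurableSet_lt_fpt hmn le_rfl)
  -- δ facts
  have hδeq : δ = ∫ ω, X (fpt n (psum X) g ω) ω *
      ind (min (nuTime n X g h ω) m < fpt n (psum X) g ω ∧ fpt n (psum X) g ω ≤ n) := by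
    rw [hδ]; exact (integral_mul_ind_eq_setIntegral hEset).symm
  have hdnp : (∫ ω, X (fpt n (psum X) g ω) ω *
      ind (min (nuTime n X g h ω) m < fpt n (psum X) g ω ∧ fpt n (psum X) g ω ≤ n)) ≤ 0 :=
    delta_nonpos hmeas hind hmean hint hσmτ
  have hdlb : -r * (ℙ {ω | min (nuTime n X g h ω) m < fpt n (psum X) g ω ∧
        fpt n (psum X) g ω ≤ n}).toReal
      ≤ ∫ ω, X (fpt n (psum X) g ω) ω *
        ind (min (nuTime n X g h ω) m < fpt n (psum X) g ω ∧ fpt n (psum X) g ω ≤ n) :=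
    delta_lowerbound hmeas hr0 hbdd hEset
  -- Markov bound
  have hQBa : (ℙ {ω | min (nuTime n X g h ω) m < fpt n (psum X) g ω ∧
        min (nuTime n X g h ω) m < m}).toReal
      ≤ (∫ ω, zhat n X g (min (nuTime n X g h ω) m) ω) / h := by
    have hpt : ∀ ω, ind (min (nuTime n X g h ω) m < fpt n (psum X) g ω ∧
        min (nuTime n X g h ω) m < m)
        ≤ zhat n X g (min (nuTime n X g h ω) m) ω / h := by
      intro ω
      by_cases hc : min (nuTime n X g h ω) m < fpt n (psum X) g ω ∧
          min (nuTime n X g h ω) m < m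
      · rw [ind_of_true hc]
        have hνm : nuTime n X g h ω < m := by
          have := hc.2; omega
        have hνn : nuTime n X g h ω ≤ n := by omega
        have hmin : min (nuTime n X g h ω) m = nuTime n X g h ω := min_eq_left (by omega)
        have hcr := nuTime_crossing hνn
        have hzh : zhat n X g (min (nuTime n X g h ω) m) ω =
            psum X (nuTime n X g h ω) ω - g (nuTime n X g h ω) := by
          unfold zhat
          rw [if_pos hc.1, hmin]
        rw [hzh]
        exact (one_le_div hh).mpr hcr
      · rw [ind_of_false hc]
        exact div_nonneg (zhat_nonneg (hτ1 ω) (hτn ω) ω) hh.le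
    have hmono := integral_mono (integrable_ind hQBset) (intZτ.div_const h) hpt
    rw [integral_ind_eq hQBset, integral_div] at hmono
    exact hmono
  -- P0 split
  have hP0split : (ℙ {ω | min (nuTime n X g h ω) m < fpt n (psum X) g ω}).toReal
      ≤ (ℙ {ω | min (nuTime n X g h ω) m < fpt n (psum X) g ω ∧
          min (nuTime n X g h ω) m < m}).toReal
        + (ℙ {ω | m < fpt n (psum X) g ω}).toReal := by
    have hpt : ∀ ω, ind (min (nuTime n X g h ω) m < fpt n (psum X) g ω)
        ≤ ind (min (nuTime n X g h ω) m < fpt n (psum X) g ω ∧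
            min (nuTime n X g h ω) m < m)
          + ind (m < fpt n (psum X) g ω) := by
      intro ω
      by_cases h1 : min (nuTime n X g h ω) m < fpt n (psum X) g ω
      · by_cases h2 : min (nuTime n X g h ω) m < m
        · rw [ind_of_true h1, ind_of_true ⟨h1, h2⟩]
          linarith [ind_nonneg (P := m < fpt n (psum X) g ω)]
        · have hτe : min (nuTime n X g h ω) m = m := by
            have := min_le_right (nuTime n X g h ω) m; omega
          rw [ind_of_true h1, ind_of_true (show m < fpt n (psum X) g ω by omega)]
          linarith [ind_nonneg (P := min (nuTime n X g h ω) m < fpt n (psum X) g ω ∧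
            min (nuTime n X g h ω) m < m)]
      · rw [ind_of_false h1]
        have := ind_nonneg (P := min (nuTime n X g h ω) m < fpt n (psum X) g ω ∧
          min (nuTime n X g h ω) m < m)
        have := ind_nonneg (P := m < fpt n (psum X) g ω)
        linarith
    have hmono := integral_mono
      (f := fun ω => ind (min (nuTime n X g h ω) m < fpt n (psum X) g ω))
      (g := fun ω => ind (min (nuTime n X g h ω) m < fpt n (psum X) g ω ∧
          min (nuTime n X g h ω) m < m) + ind (m < fpt n (psum X) g ω))
      (integrable_ind hP0set)
      (by exact (integrable_ind hQBset).add (integrable_ind hpmset)) hpt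
    rw [integral_ind_eq hP0set,
      integral_add (integrable_ind hQBset) (integrable_ind hpmset),
      integral_ind_eq hQBset, integral_ind_eq hpmset] at hmono
    exact hmono
  -- set equality for (ii)
  have hsetii : {ω | 0 < zhat n X g (min (nuTime n X g h ω) m) ω}
      = {ω | min (nuTime n X g h ω) m < fpt n (psum X) g ω} :=
    Set.ext (fun ω => zhat_pos_iff (hτ1 ω) (hτn ω) ω)
  -- subsets
  have hApm : (ℙ {ω | m < fpt n (psum X) g ω ∧ m < n}).toReal
      ≤ (ℙ {ω | m < fpt n (psum X) g ω}).toReal :=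
    toReal_mono_meas (fun ω hω => hω.1)
  have hQC : (ℙ {ω | min (nuTime n X g h ω) m < fpt n (psum X) g ω ∧
        min (nuTime n X g h ω) m < n}).toReal
      ≤ (ℙ {ω | min (nuTime n X g h ω) m < fpt n (psum X) g ω}).toReal :=
    toReal_mono_meas (fun ω hω => hω.1)
  have hPE : (ℙ {ω | min (nuTime n X g h ω) m < fpt n (psum X) g ω ∧
        fpt n (psum X) g ω ≤ n}).toReal
      ≤ (ℙ {ω | min (nuTime n X g h ω) m < fpt n (psum X) g ω}).toReal :=
    toReal_mono_meas (fun ω hω => hω.1)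
  -- nonnegativity
  have ha0 : 0 ≤ ∫ ω, zhat n X g (min (nuTime n X g h ω) m) ω :=
    integral_nonneg (fun ω => zhat_nonneg (hτ1 ω) (hτn ω) ω)
  have hb0 : 0 ≤ ∫ ω, zhat n X g m ω :=
    integral_nonneg (fun ω => zhat_nonneg hm1 hmn ω)
  have hc0 : 0 ≤ ∫ ω, zhat n X g n ω :=
    integral_nonneg (fun ω => zhat_nonneg hn1 le_rfl ω)
  have hpm0 : 0 ≤ (ℙ {ω | m < fpt n (psum X) g ω}).toReal := ENNReal.toReal_nonneg
  have hBm0 : 0 ≤ Bm := by rw [hBm]; exact Real.sqrt_nonneg _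
  -- arithmetic: 2gs·pm ≤ b/4
  have hgspm : 2*gs*(ℙ {ω | m < fpt n (psum X) g ω}).toReal ≤ (∫ ω, zhat n X g m ω)/4 := by
    rcases eq_or_lt_of_le hBm0 with heq | hpos
    · have hgs00 : gs = 0 := le_antisymm (by linarith) hgs0
      rw [hgs00]
      calc 2*0*(ℙ {ω | m < fpt n (psum X) g ω}).toReal = 0 := by ring
        _ ≤ (∫ ω, zhat n X g m ω)/4 := by linarith
    · have h2gs : 2*gs ≤ Bm/12 := by linarith
      calc 2*gs*(ℙ {ω | m < fpt n (psum X) g ω}).toReal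
          ≤ (Bm/12)*(3*(∫ ω, zhat n X g m ω)/Bm) :=
            mul_le_mul h2gs hPm hpm0 (by linarith)
        _ = (∫ ω, zhat n X g m ω)/4 := by
            field_simp
            ring
  have hBC4 : 3*(∫ ω, zhat n X g m ω) ≤ 4*(∫ ω, zhat n X g n ω) := by
    have h1 : 2*gs*(ℙ {ω | m < fpt n (psum X) g ω ∧ m < n}).toReal
        ≤ 2*gs*(ℙ {ω | m < fpt n (psum X) g ω}).toReal :=
      mul_le_mul_of_nonneg_left hApm (by linarith)
    linarith
  -- goal 1 : 2a ≤ 3b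
  have hG1 : 2*(∫ ω, zhat n X g (min (nuTime n X g h ω) m) ω)
      ≤ 3*(∫ ω, zhat n X g m ω) := by
    have h2 : 2*gs*(ℙ {ω | min (nuTime n X g h ω) m < fpt n (psum X) g ω ∧
          min (nuTime n X g h ω) m < m}).toReal
        ≤ 2*gs*((∫ ω, zhat n X g (min (nuTime n X g h ω) m) ω)/h) :=
      mul_le_mul_of_nonneg_left hQBa (by linarith)
    have h3 : 2*gs*((∫ ω, zhat n X g (min (nuTime n X g h ω) m) ω)/h)
        ≤ (∫ ω, zhat n X g (min (nuTime n X g h ω) m) ω)/3 := by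
      have h4 : 2*gs*((∫ ω, zhat n X g (min (nuTime n X g h ω) m) ω)/h)
          ≤ (h/3)*((∫ ω, zhat n X g (min (nuTime n X g h ω) m) ω)/h) :=
        mul_le_mul_of_nonneg_right (by linarith) (div_nonneg ha0 hh.le)
      have h5 : (h/3)*((∫ ω, zhat n X g (min (nuTime n X g h ω) m) ω)/h)
          = (∫ ω, zhat n X g (min (nuTime n X g h ω) m) ω)/3 := by
        have hne : h ≠ 0 := hh.ne'
        field_simp
      linarith
    linarith
  -- κ bound for P0
  have hκc : κ * En = 2*(∫ ω, zhat n X g n ω)/h + 4*(∫ ω, zhat n X g n ω)/Bm := by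
    rw [hκ, hEn]; ring
  have hA2C : (∫ ω, zhat n X g (min (nuTime n X g h ω) m) ω)
      ≤ 2*(∫ ω, zhat n X g n ω) := by linarith
  have hd1 : (∫ ω, zhat n X g (min (nuTime n X g h ω) m) ω)/h
      ≤ 2*(∫ ω, zhat n X g n ω)/h := (div_le_div_iff_of_pos_right hh).mpr hA2C
  have hd2 : 3*(∫ ω, zhat n X g m ω)/Bm ≤ 4*(∫ ω, zhat n X g n ω)/Bm := by
    rcases eq_or_lt_of_le hBm0 with heq | hpos
    · rw [← heq, div_zero, div_zero]
    · exact (div_le_div_iff_of_pos_right hpos).mpr hBC4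
  have hP0κ : (ℙ {ω | min (nuTime n X g h ω) m < fpt n (psum X) g ω}).toReal ≤ κ * En := by
    rw [hκc]
    have h1 := le_trans hPm hd2
    linarith
  have hP0κ' : 2*gs*(ℙ {ω | min (nuTime n X g h ω) m < fpt n (psum X) g ω}).toReal
      ≤ 2*gs*(κ*En) := mul_le_mul_of_nonneg_left hP0κ (by linarith)
  have hring : 2*gs*(κ*En) = 2*κ*gs*En := by ring
  -- conclusion
  refine ⟨hG1, ?_, ?_, ?_, ?_, ?_, ?_⟩
  · rw [hEn]; exact hBC4
  · rw [hsetii]; exact hP0κ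
  · -- a - En ≤ 2κ gs En
    have h5 : 2*gs*(ℙ {ω | min (nuTime n X g h ω) m < fpt n (psum X) g ω ∧
          min (nuTime n X g h ω) m < n}).toReal
        ≤ 2*gs*(ℙ {ω | min (nuTime n X g h ω) m < fpt n (psum X) g ω}).toReal :=
      mul_le_mul_of_nonneg_left hQC (by linarith)
    have CC' : (∫ ω, zhat n X g (min (nuTime n X g h ω) m) ω) - En
        ≤ 2*gs*(ℙ {ω | min (nuTime n X g h ω) m < fpt n (psum X) g ω ∧
            min (nuTime n X g h ω) m < n}).toReal := by
      rw [hEn]; exact CC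
    linarith
  · -- δ - 2κ gs En ≤ a - En
    have CD' : (∫ ω, X (fpt n (psum X) g ω) ω *
          ind (min (nuTime n X g h ω) m < fpt n (psum X) g ω ∧ fpt n (psum X) g ω ≤ n))
        - 2*gs*(ℙ {ω | min (nuTime n X g h ω) m < fpt n (psum X) g ω}).toReal
        ≤ (∫ ω, zhat n X g (min (nuTime n X g h ω) m) ω) - En := by
      rw [hEn]; exact CD
    linarith
  · -- δ ≤ 0
    linarith [hδeq, hdnp]
  · -- -(κ r En) ≤ δ
    have h8 : r*(ℙ {ω | min (nuTime n X g h ω) m < fpt n (psum X) g ω ∧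
          fpt n (psum X) g ω ≤ n}).toReal
        ≤ r*(ℙ {ω | min (nuTime n X g h ω) m < fpt n (psum X) g ω}).toReal :=
      mul_le_mul_of_nonneg_left hPE hr0
    have h9 : r*(ℙ {ω | min (nuTime n X g h ω) m < fpt n (psum X) g ω}).toReal
        ≤ r*(κ*En) := mul_le_mul_of_nonneg_left hP0κ hr0
    have h10 : -(κ*r*En) = -(r*(κ*En)) := by ring
    linarith
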